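/- arXiv:2110.09582 — 2 statements merged into one kernel-verified Lean document; each statement's English description precedes it below -/
import Mathlib

section
/- Let 0 < u < μ̄(1) where μ̄(s) := (1/n) Σ_{j=1}^n μ_j(s). For each ε > 0 let (x^{ε,u}, s^{ε,u}) denote the coexistence steady state of (S) (which exists since λ(B(1,u,ε)) ≥ μ̄(1) − u > 0). Then as ε → +∞, s^{ε,u} → μ̄^{-1}(u) and x^{ε,u} → ((1 − μ̄^{-1}(u))/n) · (1,…,1), where μ̄^{-1}(u) is the unique s ≥ 0 with μ̄(s) = u. -/
open Matrix Filter Set Topology Asymptotics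

noncomputable section

/-- The mutation matrix `T` (discrete Neumann Laplacian): `T i j = 1` if `|i-j| = 1`,
diagonal entries `-1` at the ends and `-2` inside (minus number of neighbors), `0` otherwise. -/
def mutT (n : ℕ) : Matrix (Fin n) (Fin n) ℝ :=
  Matrix.of fun i j =>
    if ((i : ℕ) + 1 = (j : ℕ) ∨ (j : ℕ) + 1 = (i : ℕ)) then 1
    else if i = j then
      -((if 0 < (i : ℕ) then (1 : ℝ) else 0) + (if (i : ℕ) + 1 < n then (1 : ℝ) else 0))
    else 0

/-- Monod kinetics `μ(s) = m s / (a + s)`. -/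
def monod (m a s : ℝ) : ℝ := m * s / (a + s)

/-- The largest eigenvalue of a (symmetric) real matrix. -/
def maxEig {n : ℕ} (A : Matrix (Fin n) (Fin n) ℝ) : ℝ :=
  sSup {t : ℝ | ∃ v : Fin n → ℝ, v ≠ 0 ∧ A.mulVec v = t • v}

/-- The matrix `B(s,u,ε) = diag(μ₁(s),…,μₙ(s)) - u Iₙ + ε T`. -/
def Bmat (n : ℕ) (m a : Fin n → ℝ) (s u ε : ℝ) : Matrix (Fin n) (Fin n) ℝ :=
  Matrix.diagonal (fun i => monod (m i) (a i) s) - u • (1 : Matrix (Fin n) (Fin n) ℝ)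
    + ε • mutT n

/-- `(x, s)` is a solution of the chemostat system with mutation (S). -/
def IsSol (n : ℕ) (m a : Fin n → ℝ) (ε u : ℝ) (x : ℝ → Fin n → ℝ) (s : ℝ → ℝ) : Prop :=
  ∀ t : ℝ, 0 ≤ t →
    (∀ i, HasDerivAt (fun τ => x τ i)
        ((monod (m i) (a i) (s t) - u) * x t i + ε * (mutT n).mulVec (x t) i) t) ∧
    HasDerivAt s (-(∑ j, monod (m j) (a j) (s t) * x t j) + u * (1 - s t)) t

/-- Admissible initial conditions `D = (ℝ₊ⁿ \ {0}) × [0,1]`. -/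
def InD (n : ℕ) (x0 : Fin n → ℝ) (s0 : ℝ) : Prop :=
  (∀ i, 0 ≤ x0 i) ∧ x0 ≠ 0 ∧ s0 ∈ Set.Icc (0 : ℝ) 1

namespace Stmt15Aux

def wq (n k : ℕ) : Fin n → ℝ :=
  fun i => (if (i : ℕ) = k then (1:ℝ) else 0) - (if (i : ℕ) = k + 1 then (1:ℝ) else 0)

lemma mutT_eq (n : ℕ) :
    mutT n = -∑ k ∈ Finset.range (n-1), Matrix.vecMulVec (wq n k) (wq n k) := by
  ext i j
  have hi : (i:ℕ) < n := i.isLt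
  have hj : (j:ℕ) < n := j.isLt
  simp only [Matrix.neg_apply, Matrix.sum_apply, Matrix.vecMulVec_apply, mutT, Matrix.of_apply]
  by_cases hadj : (i:ℕ) + 1 = (j:ℕ) ∨ (j:ℕ) + 1 = (i:ℕ)
  · rw [if_pos hadj]
    rcases hadj with h | h
    · have hper : ∀ k ∈ Finset.range (n-1), wq n k i * wq n k j
          = -(if (i:ℕ) = k then (1:ℝ) else 0) := by
        intro k _
        simp only [wq]
        split_ifs <;> first | omega | norm_num
      rw [Finset.sum_congr rfl hper, Finset.sum_neg_distrib, Finset.sum_ite_eq]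
      have : (i:ℕ) ∈ Finset.range (n-1) := Finset.mem_range.mpr (by omega)
      rw [if_pos this]; ring
    · have hper : ∀ k ∈ Finset.range (n-1), wq n k i * wq n k j
          = -(if (j:ℕ) = k then (1:ℝ) else 0) := by
        intro k _
        simp only [wq]
        split_ifs <;> first | omega | norm_num
      rw [Finset.sum_congr rfl hper, Finset.sum_neg_distrib, Finset.sum_ite_eq]
      have : (j:ℕ) ∈ Finset.range (n-1) := Finset.mem_range.mpr (by omega)
      rw [if_pos this]; ring
  · rw [if_neg hadj]
    rcases eq_or_ne i j with rfl | hij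
    · rw [if_pos rfl]
      have hper : ∀ k ∈ Finset.range (n-1), wq n k i * wq n k i
          = (if (i:ℕ) = k then (1:ℝ) else 0) + (if (i:ℕ) = k + 1 then (1:ℝ) else 0) := by
        intro k _
        simp only [wq]
        split_ifs <;> first | omega | norm_num
      rw [Finset.sum_congr rfl hper, Finset.sum_add_distrib, Finset.sum_ite_eq]
      have h2 : (∑ k ∈ Finset.range (n-1), if (i:ℕ) = k + 1 then (1:ℝ) else 0)
          = if 0 < (i:ℕ) then (1:ℝ) else 0 := by
        by_cases hp : 0 < (i:ℕ)
        · rw [if_pos hp]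
          have hc : ∀ k ∈ Finset.range (n-1), (if (i:ℕ) = k + 1 then (1:ℝ) else 0)
              = (if (i:ℕ) - 1 = k then (1:ℝ) else 0) := by
            intro k _; exact if_congr (by omega) rfl rfl
          rw [Finset.sum_congr rfl hc, Finset.sum_ite_eq,
            if_pos (Finset.mem_range.mpr (by omega))]
        · rw [if_neg hp]
          exact Finset.sum_eq_zero fun k _ => if_neg (by omega)
      rw [h2]
      by_cases hlast : (i:ℕ) + 1 < n
      · rw [if_pos hlast, if_pos (Finset.mem_range.mpr (by omega))]; ring
      · have hnr : (i:ℕ) ∉ Finset.range (n-1) := by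
          simp only [Finset.mem_range]; omega
        rw [if_neg hlast, if_neg hnr]; ring
    · rw [if_neg hij]
      have hij' : (i:ℕ) ≠ (j:ℕ) := fun h => hij (Fin.ext h)
      rw [Finset.sum_eq_zero, neg_zero]
      intro k _
      simp only [wq]
      split_ifs <;> first | omega | norm_num

lemma sum_ite_coe (n : ℕ) (x : Fin n → ℝ) (k : ℕ) (hk : k < n) :
    (∑ i : Fin n, if (i:ℕ) = k then x i else 0) = x ⟨k, hk⟩ := by
  rw [Finset.sum_eq_single_of_mem (⟨k, hk⟩ : Fin n) (Finset.mem_univ _)]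
  · simp
  · intro b _ hb
    exact if_neg (fun h => hb (Fin.ext h))

lemma dot_eval (n : ℕ) (x : Fin n → ℝ) (k : ℕ) (hk : k + 1 < n) :
    ∑ i, wq n k i * x i = x ⟨k, by omega⟩ - x ⟨k+1, hk⟩ := by
  simp only [wq, sub_mul, one_mul, zero_mul, ite_mul, Finset.sum_sub_distrib]
  rw [sum_ite_coe n x k (by omega), sum_ite_coe n x (k+1) hk]

lemma sum_mulVec {n : ℕ} (s : Finset ℕ) (A : ℕ → Matrix (Fin n) (Fin n) ℝ) (x : Fin n → ℝ)
    (i : Fin n) : (∑ k ∈ s, A k).mulVec x i = ∑ k ∈ s, (A k).mulVec x i := by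
  simp only [Matrix.mulVec, dotProduct, Matrix.sum_apply, Finset.sum_mul]
  exact Finset.sum_comm

lemma vecMulVec_mulVec' {n : ℕ} (a b x : Fin n → ℝ) (i : Fin n) :
    (Matrix.vecMulVec a b).mulVec x i = a i * ∑ j, b j * x j := by
  simp only [Matrix.mulVec, dotProduct, Matrix.vecMulVec_apply, Finset.mul_sum]
  exact Finset.sum_congr rfl fun j _ => by ring

lemma quad (n : ℕ) (v x : Fin n → ℝ) :
    ∑ i, v i * (mutT n).mulVec x i
      = -∑ k ∈ Finset.range (n-1), (∑ i, wq n k i * v i) * (∑ i, wq n k i * x i) := by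
  have h1 : ∀ i, (mutT n).mulVec x i
      = -∑ k ∈ Finset.range (n-1), wq n k i * ∑ j, wq n k j * x j := by
    intro i
    rw [mutT_eq, Matrix.neg_mulVec, Pi.neg_apply, sum_mulVec]
    rw [Finset.sum_congr rfl fun k _ => vecMulVec_mulVec' (wq n k) (wq n k) x i]
  calc ∑ i, v i * (mutT n).mulVec x i
      = ∑ i, -∑ k ∈ Finset.range (n-1), v i * (wq n k i * ∑ j, wq n k j * x j) := by
        refine Finset.sum_congr rfl fun i _ => ?_
        rw [h1 i, mul_neg, Finset.mul_sum]
    _ = -∑ i, ∑ k ∈ Finset.range (n-1), v i * (wq n k i * ∑ j, wq n k j * x j) := by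
        rw [Finset.sum_neg_distrib]
    _ = -∑ k ∈ Finset.range (n-1), ∑ i, v i * (wq n k i * ∑ j, wq n k j * x j) := by
        rw [Finset.sum_comm]
    _ = -∑ k ∈ Finset.range (n-1), (∑ i, wq n k i * v i) * (∑ i, wq n k i * x i) := by
        congr 1
        refine Finset.sum_congr rfl fun k _ => ?_
        rw [Finset.sum_mul]
        exact Finset.sum_congr rfl fun i _ => by ring

lemma monod_nonneg {m a s : ℝ} (hm : 0 < m) (ha : 0 < a) (hs : 0 ≤ s) : 0 ≤ monod m a s := by
  unfold monod; positivity

lemma monod_le {m a s : ℝ} (hm : 0 < m) (ha : 0 < a) (hs : 0 ≤ s) : monod m a s ≤ m := by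
  unfold monod
  rw [div_le_iff₀ (by linarith)]
  nlinarith

lemma monod_lt {m a s t : ℝ} (hm : 0 < m) (ha : 0 < a) (hs : 0 ≤ s) (hst : s < t) :
    monod m a s < monod m a t := by
  unfold monod
  rw [div_lt_div_iff₀ (by linarith) (by linarith)]
  nlinarith [mul_pos (mul_pos hm ha) (sub_pos.mpr hst)]

/-- Master per-`ε` estimates at a steady state. -/
lemma perEps (n : ℕ) (hn : 0 < n) (m a : Fin n → ℝ) (hm : ∀ i, 0 < m i) (ha : ∀ i, 0 < a i)
    (u ε : ℝ) (hu : 0 < u) (hε : 0 < ε)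
    (x : Fin n → ℝ) (s : ℝ) (hx : ∀ i, 0 < x i) (hs : s ∈ Set.Ioo (0:ℝ) 1)
    (hB : (Bmat n m a s u ε).mulVec x = 0) (hsum : (∑ j, x j) + s = 1) :
    (∑ j, monod (m j) (a j) s ≤ (n:ℝ) * u) ∧
    (∀ i, |x i - (1 - s)/(n:ℝ)| ≤ Real.sqrt ((n:ℝ) * (∑ j, m j) / ε)) ∧
    ((1 - s) * ((n:ℝ) * u - ∑ j, monod (m j) (a j) s)
      ≤ (n:ℝ) * ((∑ j, m j) + (n:ℝ) * u) * Real.sqrt ((n:ℝ) * (∑ j, m j) / ε)) := by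
  have hM0 : 0 ≤ ∑ j, m j := Finset.sum_nonneg fun j _ => (hm j).le
  set M := ∑ j, m j with hMdef
  set Bd := Real.sqrt ((n:ℝ) * M / ε) with hBdef
  have hBd0 : 0 ≤ Bd := Real.sqrt_nonneg _
  -- basic equation
  have key : ∀ i, ε * (mutT n).mulVec x i = (u - monod (m i) (a i) s) * x i := by
    intro i
    have h0 := congrFun hB i
    simp only [Bmat, Matrix.add_mulVec, Matrix.sub_mulVec, Matrix.smul_mulVec,
      Matrix.mulVec_diagonal, Matrix.one_mulVec, Pi.add_apply, Pi.sub_apply, Pi.smul_apply,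
      smul_eq_mul, Pi.zero_apply] at h0
    linarith
  -- the test identity
  have test : ∀ v : Fin n → ℝ,
      ∑ i, (u - monod (m i) (a i) s) * x i * v i
        = -ε * ∑ k ∈ Finset.range (n-1), (∑ i, wq n k i * v i) * (∑ i, wq n k i * x i) := by
    intro v
    have h1 : ∑ i, (u - monod (m i) (a i) s) * x i * v i
        = ε * ∑ i, v i * (mutT n).mulVec x i := by
      rw [Finset.mul_sum]
      refine Finset.sum_congr rfl fun i _ => ?_
      rw [← key i]
      ring
    rw [h1, quad]
    ring
  -- x bounds
  have hxsum : ∑ j, x j = 1 - s := by linarith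
  have hxle : ∀ i, x i ≤ 1 := by
    intro i
    have h1 : x i ≤ ∑ j, x j :=
      Finset.single_le_sum (fun j _ => (hx j).le) (Finset.mem_univ i)
    rw [hxsum] at h1
    linarith [hs.1]
  -- Fact A : ∑ μ ≤ n u   (test with v = 1/x)
  have factA : ∑ j, monod (m j) (a j) s ≤ (n:ℝ) * u := by
    have h := test (fun i => (x i)⁻¹)
    have hL : ∑ i, (u - monod (m i) (a i) s) * x i * (x i)⁻¹
        = ∑ i, (u - monod (m i) (a i) s) := by
      refine Finset.sum_congr rfl fun i _ => ?_
      rw [mul_assoc, mul_inv_cancel₀ (hx i).ne', mul_one]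
    rw [hL] at h
    have hR : (0:ℝ) ≤ -ε * ∑ k ∈ Finset.range (n-1),
        (∑ i, wq n k i * (fun i => (x i)⁻¹) i) * (∑ i, wq n k i * x i) := by
      rw [neg_mul, neg_nonneg]
      refine mul_nonpos_of_nonneg_of_nonpos hε.le ?_
      refine Finset.sum_nonpos fun k hk => ?_
      have hk' : k + 1 < n := by
        have := Finset.mem_range.mp hk; omega
      rw [dot_eval n _ k hk', dot_eval n x k hk']
      set p := x ⟨k, by omega⟩
      set q := x ⟨k+1, hk'⟩
      have hp : 0 < p := hx _
      have hq : 0 < q := hx _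
      have : (p⁻¹ - q⁻¹) * (p - q) = -((p - q)^2 / (p * q)) := by
        field_simp; ring
      rw [this]
      have : 0 ≤ (p - q)^2 / (p * q) := by positivity
      linarith
    rw [← h] at hR
    have hsplit : ∑ i, (u - monod (m i) (a i) s)
        = (n:ℝ) * u - ∑ i, monod (m i) (a i) s := by
      rw [Finset.sum_sub_distrib, Finset.sum_const, Finset.card_univ, Fintype.card_fin,
        nsmul_eq_mul]
    rw [hsplit] at hR
    linarith
  refine ⟨factA, ?_⟩
  -- Fact C : Dirichlet energy bound  (test with v = x)
  have factC : ∑ k ∈ Finset.range (n-1), (∑ i, wq n k i * x i)^2 ≤ M / ε := by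
    have h := test x
    have hL : -M ≤ ∑ i, (u - monod (m i) (a i) s) * x i * x i := by
      rw [hMdef, ← Finset.sum_neg_distrib]
      refine Finset.sum_le_sum fun i _ => ?_
      have h1 : monod (m i) (a i) s ≤ m i := monod_le (hm i) (ha i) hs.1.le
      have h2 : 0 ≤ monod (m i) (a i) s := monod_nonneg (hm i) (ha i) hs.1.le
      have h3 : 0 < x i := hx i
      have h4 : x i ≤ 1 := hxle i
      have h5 : x i * x i ≤ 1 := by nlinarith
      have h6 : monod (m i) (a i) s * (x i * x i) ≤ m i := by nlinarith
      have h7 : 0 ≤ u * (x i * x i) := by positivity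
      nlinarith
    rw [h] at hL
    have hq : ∑ k ∈ Finset.range (n-1), (∑ i, wq n k i * x i)^2
        = ∑ k ∈ Finset.range (n-1), (∑ i, wq n k i * x i) * (∑ i, wq n k i * x i) :=
      Finset.sum_congr rfl fun k _ => sq _
    rw [hq, le_div_iff₀ hε]
    nlinarith [hL]
  -- sum of absolute increments is ≤ Bd
  have habs : ∑ k ∈ Finset.range (n-1), |∑ i, wq n k i * x i| ≤ Bd := by
    have h1 : (∑ k ∈ Finset.range (n-1), |∑ i, wq n k i * x i|)^2
        ≤ ((n-1 : ℕ):ℝ) * ∑ k ∈ Finset.range (n-1), |∑ i, wq n k i * x i|^2 := by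
      have := sq_sum_le_card_mul_sum_sq (s := Finset.range (n-1))
        (f := fun k => |∑ i, wq n k i * x i|)
      simpa using this
    have h2 : ∑ k ∈ Finset.range (n-1), |∑ i, wq n k i * x i|^2 ≤ M / ε := by
      calc ∑ k ∈ Finset.range (n-1), |∑ i, wq n k i * x i|^2
          = ∑ k ∈ Finset.range (n-1), (∑ i, wq n k i * x i)^2 :=
            Finset.sum_congr rfl fun k _ => sq_abs _
        _ ≤ M / ε := factC
    have h3 : (∑ k ∈ Finset.range (n-1), |∑ i, wq n k i * x i|)^2 ≤ (n:ℝ) * M / ε := by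
      have hme : 0 ≤ M / ε := div_nonneg hM0 hε.le
      have hcast : ((n-1:ℕ):ℝ) ≤ (n:ℝ) := by
        exact_mod_cast Nat.sub_le n 1
      have hn0 : (0:ℝ) ≤ ((n-1:ℕ):ℝ) := Nat.cast_nonneg _
      calc (∑ k ∈ Finset.range (n-1), |∑ i, wq n k i * x i|)^2
          ≤ ((n-1 : ℕ):ℝ) * (M / ε) := le_trans h1 (mul_le_mul_of_nonneg_left h2 hn0)
        _ ≤ (n:ℝ) * (M / ε) := mul_le_mul_of_nonneg_right hcast hme
        _ = (n:ℝ) * M / ε := by ring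
    rw [hBdef]
    rw [Real.le_sqrt (Finset.sum_nonneg fun k _ => abs_nonneg _)
      (by positivity)]
    exact h3
  -- pairwise closeness
  have hij : ∀ i j : Fin n, |x i - x j| ≤ ∑ k ∈ Finset.range (n-1), |∑ i, wq n k i * x i| := by
    have base : ∀ i j : Fin n, (i:ℕ) ≤ (j:ℕ) →
        |x j - x i| ≤ ∑ k ∈ Finset.range (n-1), |∑ i, wq n k i * x i| := by
      intro i j hle
      set F : ℕ → ℝ := fun t => x ⟨min t (n-1), by omega⟩ with hF
      have hFi : F (i:ℕ) = x i := by
        have : (⟨min (i:ℕ) (n-1), by omega⟩ : Fin n) = i := by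
          apply Fin.ext; simp; omega
        simp only [hF, this]
      have hFj : F (j:ℕ) = x j := by
        have : (⟨min (j:ℕ) (n-1), by omega⟩ : Fin n) = j := by
          apply Fin.ext; simp; omega
        simp only [hF, this]
      have htel : x j - x i = ∑ k ∈ Finset.Ico (i:ℕ) (j:ℕ), (F (k+1) - F k) := by
        rw [Finset.sum_Ico_eq_sub _ hle, Finset.sum_range_sub, Finset.sum_range_sub, hFi, hFj]
        ring
      have hsx : ∀ k ∈ Finset.Ico (i:ℕ) (j:ℕ), F (k+1) - F k = -(∑ i, wq n k i * x i) := by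
        intro k hk
        have hk1 : k + 1 < n := by
          have := Finset.mem_Ico.mp hk
          omega
        rw [dot_eval n x k hk1]
        have e1 : (⟨min (k+1) (n-1), by omega⟩ : Fin n) = ⟨k+1, hk1⟩ := by
          apply Fin.ext; simp; omega
        have e2 : (⟨min k (n-1), by omega⟩ : Fin n) = ⟨k, by omega⟩ := by
          apply Fin.ext; simp; omega
        simp only [hF, e1, e2]
        ring
      calc |x j - x i| = |∑ k ∈ Finset.Ico (i:ℕ) (j:ℕ), (F (k+1) - F k)| := by rw [htel]
        _ ≤ ∑ k ∈ Finset.Ico (i:ℕ) (j:ℕ), |F (k+1) - F k| :=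
            Finset.abs_sum_le_sum_abs _ _
        _ = ∑ k ∈ Finset.Ico (i:ℕ) (j:ℕ), |∑ i, wq n k i * x i| := by
            refine Finset.sum_congr rfl fun k hk => ?_
            rw [hsx k hk, abs_neg]
        _ ≤ ∑ k ∈ Finset.range (n-1), |∑ i, wq n k i * x i| := by
            refine Finset.sum_le_sum_of_subset_of_nonneg ?_ fun k _ _ => abs_nonneg _
            intro k hk
            have h1 := Finset.mem_Ico.mp hk
            have h2 : (j:ℕ) < n := j.isLt
            exact Finset.mem_range.mpr (by omega)
    intro i j
    rcases le_total (i:ℕ) (j:ℕ) with h | h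
    · rw [abs_sub_comm]; exact base i j h
    · exact base j i h
  -- Fact H
  have factH : ∀ i, |x i - (1 - s)/(n:ℝ)| ≤ Bd := by
    intro i
    have hnpos : (0:ℝ) < (n:ℝ) := by exact_mod_cast hn
    have havg : x i - (1 - s)/(n:ℝ) = (∑ j, (x i - x j)) / (n:ℝ) := by
      rw [Finset.sum_sub_distrib, Finset.sum_const, Finset.card_univ, Fintype.card_fin,
        nsmul_eq_mul, hxsum]
      field_simp
    rw [havg, abs_div, abs_of_pos hnpos, div_le_iff₀ hnpos]
    calc |∑ j, (x i - x j)| ≤ ∑ j, |x i - x j| := Finset.abs_sum_le_sum_abs _ _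
      _ ≤ ∑ _j : Fin n, Bd := Finset.sum_le_sum fun j _ =>
          le_trans (hij i j) habs
      _ = (n:ℝ) * Bd := by
          rw [Finset.sum_const, Finset.card_univ, Fintype.card_fin, nsmul_eq_mul]
      _ = Bd * (n:ℝ) := by ring
  refine ⟨factH, ?_⟩
  -- orthogonality with v = 1
  have horth : ∑ i, (u - monod (m i) (a i) s) * x i = 0 := by
    have h := test (fun _ => (1:ℝ))
    have hR : ∀ k ∈ Finset.range (n-1), (∑ i, wq n k i * (fun _ => (1:ℝ)) i) = 0 := by
      intro k hk
      have hk1 : k + 1 < n := by have := Finset.mem_range.mp hk; omega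
      rw [dot_eval n (fun _ => (1:ℝ)) k hk1]
      ring
    have : ∑ i, (u - monod (m i) (a i) s) * x i * (fun _ => (1:ℝ)) i = 0 := by
      rw [h]
      rw [Finset.sum_congr rfl fun k hk => by rw [hR k hk, zero_mul]]
      simp
    simpa using this
  have hsplit : ∑ i, (u - monod (m i) (a i) s)
      = (n:ℝ) * u - ∑ i, monod (m i) (a i) s := by
    rw [Finset.sum_sub_distrib, Finset.sum_const, Finset.card_univ, Fintype.card_fin,
      nsmul_eq_mul]
  -- Fact E
  have hnpos : (0:ℝ) < (n:ℝ) := by exact_mod_cast hn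
  set c := (1 - s)/(n:ℝ) with hcdef
  have hc : ∑ i, (u - monod (m i) (a i) s) * (c - x i)
      = c * ((n:ℝ) * u - ∑ j, monod (m j) (a j) s) := by
    simp only [mul_sub, Finset.sum_sub_distrib]
    rw [horth, ← Finset.sum_mul, hsplit]
    ring
  have hbound : c * ((n:ℝ) * u - ∑ j, monod (m j) (a j) s) ≤ ((n:ℝ) * u + M) * Bd := by
    rw [← hc]
    calc ∑ i, (u - monod (m i) (a i) s) * (c - x i)
        ≤ ∑ i, (u + m i) * Bd := by
          refine Finset.sum_le_sum fun i _ => ?_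
          have h1 : monod (m i) (a i) s ≤ m i := monod_le (hm i) (ha i) hs.1.le
          have h2 : 0 ≤ monod (m i) (a i) s := monod_nonneg (hm i) (ha i) hs.1.le
          have h3 : |u - monod (m i) (a i) s| ≤ u + m i := by
            rw [abs_le]; constructor <;> nlinarith
          have h4 : |c - x i| ≤ Bd := by
            rw [abs_sub_comm]; exact factH i
          calc (u - monod (m i) (a i) s) * (c - x i)
              ≤ |(u - monod (m i) (a i) s) * (c - x i)| := le_abs_self _
            _ = |u - monod (m i) (a i) s| * |c - x i| := abs_mul _ _
            _ ≤ (u + m i) * Bd := by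
                apply mul_le_mul h3 h4 (abs_nonneg _) (by linarith [hm i])
      _ = ((n:ℝ) * u + M) * Bd := by
          rw [← Finset.sum_mul, Finset.sum_add_distrib, Finset.sum_const, Finset.card_univ,
            Fintype.card_fin, nsmul_eq_mul, hMdef]
  calc (1 - s) * ((n:ℝ) * u - ∑ j, monod (m j) (a j) s)
      = (n:ℝ) * (c * ((n:ℝ) * u - ∑ j, monod (m j) (a j) s)) := by
        rw [hcdef]; field_simp
    _ ≤ (n:ℝ) * (((n:ℝ) * u + M) * Bd) := mul_le_mul_of_nonneg_left hbound hnpos.le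
    _ = (n:ℝ) * (M + (n:ℝ) * u) * Bd := by ring
end Stmt15Aux

open Stmt15Aux in
/-- behavior of the coexistence steady state `(x^{ε,u}, s^{ε,u})` as `ε → +∞`:
`s^{ε,u} → μ̄⁻¹(u)` and `x^{ε,u} → ((1 - μ̄⁻¹(u))/n)·(1,…,1)`. -/
theorem stmt_15 (n : ℕ) (hn : 1 ≤ n) (m a : Fin n → ℝ)
    (hm : ∀ i, 0 < m i) (ha : ∀ i, 0 < a i)
    (u : ℝ) (hu : 0 < u) (hub : u < (1 / (n : ℝ)) * ∑ j, monod (m j) (a j) 1)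
    (X : ℝ → Fin n → ℝ) (S : ℝ → ℝ)
    (hsteady : ∀ ε : ℝ, 0 < ε →
      (∀ i, 0 < X ε i) ∧ S ε ∈ Set.Ioo (0 : ℝ) 1 ∧
      (Bmat n m a (S ε) u ε).mulVec (X ε) = 0 ∧ (∑ j, X ε j) + S ε = 1)
    (sbar : ℝ) (hsb : 0 ≤ sbar)
    (hsbar : (1 / (n : ℝ)) * ∑ j, monod (m j) (a j) sbar = u) :
    Tendsto S atTop (𝓝 sbar) ∧
    Tendsto X atTop (𝓝 (fun _ => (1 - sbar) / (n : ℝ))) := by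
  have hn0 : 0 < n := hn
  have hnpos : (0:ℝ) < (n:ℝ) := by exact_mod_cast hn0
  set M := ∑ j, m j with hMdef
  have hM0 : 0 ≤ M := Finset.sum_nonneg fun j _ => (hm j).le
  set Φ : ℝ → ℝ := fun s => ∑ j, monod (m j) (a j) s with hΦ
  have hΦmono : ∀ s t : ℝ, 0 ≤ s → s < t → Φ s < Φ t := by
    intro s t hs hst
    have : Nonempty (Fin n) := ⟨⟨0, hn0⟩⟩
    exact Finset.sum_lt_sum_of_nonempty Finset.univ_nonempty
      fun i _ => monod_lt (hm i) (ha i) hs hst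
  have hΦmono' : ∀ s t : ℝ, 0 ≤ s → s ≤ t → Φ s ≤ Φ t := by
    intro s t hs hst
    rcases eq_or_lt_of_le hst with rfl | h
    · exact le_refl _
    · exact (hΦmono s t hs h).le
  have hΦsbar : Φ sbar = (n:ℝ) * u := by
    have h := hsbar
    field_simp at h
    simp only [hΦ]
    linarith
  have hΦ1 : (n:ℝ) * u < Φ 1 := by
    have h := mul_lt_mul_of_pos_left hub hnpos
    rw [← mul_assoc, mul_one_div, div_self hnpos.ne', one_mul] at h
    exact h
  have hsbar1 : sbar < 1 := by
    by_contra hcon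
    push_neg at hcon
    rcases eq_or_lt_of_le hcon with h | h
    · rw [← h] at hΦsbar; linarith
    · have := hΦmono 1 sbar zero_le_one h
      linarith
  have hsbar0 : 0 < sbar := by
    rcases hsb.eq_or_lt with h | h
    · exfalso
      have h0 : Φ 0 = 0 := by
        simp [hΦ, monod]
      rw [← h, h0] at hΦsbar
      nlinarith
    · exact h
  have hper : ∀ ε : ℝ, 0 < ε →
      (Φ (S ε) ≤ (n:ℝ)*u) ∧
      (∀ i, |X ε i - (1 - S ε)/(n:ℝ)| ≤ Real.sqrt ((n:ℝ)*M/ε)) ∧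
      ((1 - S ε) * ((n:ℝ)*u - Φ (S ε)) ≤ (n:ℝ)*(M + (n:ℝ)*u)*Real.sqrt ((n:ℝ)*M/ε)) := by
    intro ε hε
    obtain ⟨h1, h2, h3, h4⟩ := hsteady ε hε
    exact perEps n hn0 m a hm ha u ε hu hε (X ε) (S ε) h1 h2 h3 h4
  have hSle : ∀ ε : ℝ, 0 < ε → S ε ≤ sbar := by
    intro ε hε
    by_contra hcon
    push_neg at hcon
    have h1 := hΦmono sbar (S ε) hsb hcon
    have h2 := (hper ε hε).1
    rw [hΦsbar] at h1
    linarith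
  have hBdT : Tendsto (fun ε : ℝ => Real.sqrt ((n:ℝ)*M/ε)) atTop (𝓝 0) := by
    have h1 : Tendsto (fun ε : ℝ => (n:ℝ)*M/ε) atTop (𝓝 0) :=
      tendsto_const_nhds.div_atTop tendsto_id
    have h2 := (Real.continuous_sqrt.tendsto 0).comp h1
    simpa [Function.comp_def] using h2
  have hgapT : Tendsto (fun ε : ℝ => (n:ℝ)*(M + (n:ℝ)*u)*Real.sqrt ((n:ℝ)*M/ε))
      atTop (𝓝 0) := by
    simpa using hBdT.const_mul ((n:ℝ)*(M + (n:ℝ)*u))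
  have hS : Tendsto S atTop (𝓝 sbar) := by
    rw [Metric.tendsto_atTop]
    intro δ hδ
    set s₀ := max (sbar - δ/2) (sbar/2) with hs₀
    have hs₀0 : 0 ≤ s₀ := le_max_of_le_right (by linarith)
    have hs₀lt : s₀ < sbar := max_lt (by linarith) (by linarith)
    have hΦs₀ : Φ s₀ < (n:ℝ)*u := by
      have := hΦmono s₀ sbar hs₀0 hs₀lt
      linarith
    have hgap0 : (0:ℝ) < ((n:ℝ)*u - Φ s₀) * (1 - sbar) :=
      mul_pos (by linarith) (by linarith)
    obtain ⟨N, hN⟩ := eventually_atTop.mp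
      ((hgapT.eventually_lt_const hgap0).and (eventually_ge_atTop 1))
    refine ⟨N, fun ε hε => ?_⟩
    obtain ⟨hlt, hε1⟩ := hN ε hε
    have hεpos : (0:ℝ) < ε := lt_of_lt_of_le one_pos hε1
    obtain ⟨hA, hH, hE⟩ := hper ε hεpos
    have hsle := hSle ε hεpos
    have hSpos := (hsteady ε hεpos).2.1.1
    -- from hE and hlt : (1-Sε)(nu - ΦSε) < (nu - Φs₀)(1-sbar)
    have h1 : (1 - sbar) * ((n:ℝ)*u - Φ (S ε)) < ((n:ℝ)*u - Φ s₀) * (1 - sbar) := by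
      have h2 : (1 - sbar) * ((n:ℝ)*u - Φ (S ε)) ≤ (1 - S ε) * ((n:ℝ)*u - Φ (S ε)) :=
        mul_le_mul_of_nonneg_right (by linarith) (by linarith)
      linarith
    have h3 : Φ s₀ < Φ (S ε) := by
      have h4 : (n:ℝ)*u - Φ (S ε) < (n:ℝ)*u - Φ s₀ := by
        have h5 : (0:ℝ) < 1 - sbar := by linarith
        nlinarith
      linarith
    have h6 : s₀ < S ε := by
      by_contra hcon
      push_neg at hcon
      have := hΦmono' (S ε) s₀ hSpos.le hcon
      linarith
    have h7 : sbar - s₀ ≤ δ/2 := by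
      have := le_max_left (sbar - δ/2) (sbar/2)
      linarith
    rw [Real.dist_eq]
    have habs : |S ε - sbar| = sbar - S ε := by
      rw [abs_of_nonpos (by linarith)]; ring
    rw [habs]
    linarith
  refine ⟨hS, ?_⟩
  rw [tendsto_pi_nhds]
  intro i
  have h1 : Tendsto (fun ε => X ε i - (1 - S ε)/(n:ℝ)) atTop (𝓝 0) := by
    refine squeeze_zero_norm' ?_ hBdT
    filter_upwards [eventually_gt_atTop 0] with ε hε
    simpa [Real.norm_eq_abs] using (hper ε hε).2.1 i
  have h2 : Tendsto (fun ε => (1 - S ε)/(n:ℝ)) atTop (𝓝 ((1 - sbar)/(n:ℝ))) :=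
    (tendsto_const_nhds.sub hS).div_const _
  have h3 := h1.add h2
  rw [zero_add] at h3
  exact Tendsto.congr (fun ε => by ring) h3
end
end

section
/- Let ε > 0 and u = 0. Then every solution (x, s) of (S) with initial condition (x⁰, s⁰) ∈ D converges as t → +∞ to the point ((b(0)/n)·(1,…,1), 0), where b(0) := s⁰ + Σ_{j=1}^n x⁰_j. -/
open Matrix Filter Set Topology Asymptotics

noncomputable section

/-- extension of a `Fin n` vector to `ℕ` by zero -/
def fext {n : ℕ} (w : Fin n → ℝ) : ℕ → ℝ := fun k => if h : k < n then w ⟨k, h⟩ else 0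

lemma fext_coe {n : ℕ} (w : Fin n → ℝ) (i : Fin n) : fext w (i : ℕ) = w i := by
  simp [fext, i.isLt]

lemma mulVec_mutT {n : ℕ} (w : Fin n → ℝ) (i : Fin n) :
    (mutT n).mulVec w i =
      (if 0 < (i : ℕ) then fext w ((i : ℕ) - 1) else 0)
      + (if (i : ℕ) + 1 < n then fext w ((i : ℕ) + 1) else 0)
      - ((if 0 < (i : ℕ) then (1 : ℝ) else 0) + (if (i : ℕ) + 1 < n then (1 : ℝ) else 0)) * w i := by
  have hsplit : ∀ j : Fin n, mutT n i j * w j =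
      (if ((j : ℕ) + 1 = (i : ℕ)) then w j else 0)
      + (if ((i : ℕ) + 1 = (j : ℕ)) then w j else 0)
      + (if j = i then
          -((if 0 < (i : ℕ) then (1 : ℝ) else 0) + (if (i : ℕ) + 1 < n then (1 : ℝ) else 0)) * w j
         else 0) := by
    intro j
    simp only [mutT, Matrix.of_apply]
    by_cases h1 : (j : ℕ) + 1 = (i : ℕ)
    · have h2 : ¬ (i : ℕ) + 1 = (j : ℕ) := by omega
      have h3 : ¬ j = i := by intro h; rw [h] at h1; omega
      simp [h1, h2, h3]
    · by_cases h2 : (i : ℕ) + 1 = (j : ℕ)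
      · have h3 : ¬ j = i := by intro h; rw [h] at h2; omega
        simp [h1, h2, h3]
      · by_cases h3 : j = i
        · simp [h1, h2, h3]
        · have h3' : ¬ i = j := fun h => h3 h.symm
          simp [h1, h2, h3, h3']
  have hmv : (mutT n).mulVec w i = ∑ j, mutT n i j * w j := rfl
  rw [hmv]
  simp only [hsplit, Finset.sum_add_distrib]
  congr 1
  · congr 1
    · -- left neighbor sum
      by_cases h : 0 < (i : ℕ)
      · have hlt : (i : ℕ) - 1 < n := by omega
        have : ∀ j : Fin n, ((j : ℕ) + 1 = (i : ℕ)) ↔ j = ⟨(i : ℕ) - 1, hlt⟩ := by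
          intro j; rw [Fin.ext_iff]; simp; omega
        simp only [this]
        rw [Finset.sum_ite_eq' Finset.univ (⟨(i : ℕ) - 1, hlt⟩ : Fin n) w]
        simp [h, fext, hlt]
      · have : ∀ j : Fin n, ¬ ((j : ℕ) + 1 = (i : ℕ)) := by intro j; omega
        simp [this, h]
    · -- right neighbor sum
      by_cases h : (i : ℕ) + 1 < n
      · have : ∀ j : Fin n, ((i : ℕ) + 1 = (j : ℕ)) ↔ j = ⟨(i : ℕ) + 1, h⟩ := by
          intro j; rw [Fin.ext_iff]; simp; omega
        simp only [this]
        rw [Finset.sum_ite_eq' Finset.univ (⟨(i : ℕ) + 1, h⟩ : Fin n) w]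
        simp [h, fext]
      · have : ∀ j : Fin n, ¬ ((i : ℕ) + 1 = (j : ℕ)) := by
          intro j; have := j.isLt; omega
        simp [this, h]
  · rw [Finset.sum_ite_eq' Finset.univ i]
    simp; ring

lemma shift_sum (n : ℕ) (g : ℕ → ℝ) :
    ∑ i : Fin n, (if 0 < (i : ℕ) then g (i : ℕ) else 0)
      = ∑ i : Fin n, (if (i : ℕ) + 1 < n then g ((i : ℕ) + 1) else 0) := by
  rw [Fin.sum_univ_eq_sum_range (fun k => if 0 < k then g k else 0) n,
      Fin.sum_univ_eq_sum_range (fun k => if k + 1 < n then g (k + 1) else 0) n]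
  rw [← Finset.sum_filter, ← Finset.sum_filter]
  have h1 : (Finset.range n).filter (fun k => 0 < k) = Finset.Ico 1 n := by
    ext k; simp; omega
  have h2 : (Finset.range n).filter (fun k => k + 1 < n) = Finset.range (n - 1) := by
    ext k; simp; omega
  rw [h1, h2, Finset.sum_Ico_eq_sum_range]
  simp [add_comm]

lemma mulVec_mutT_const {n : ℕ} (c : ℝ) (i : Fin n) :
    (mutT n).mulVec (fun _ => c) i = 0 := by
  rw [mulVec_mutT]
  have h1 : (i : ℕ) < n := i.isLt
  have hf : ∀ k : ℕ, k < n → fext (fun _ : Fin n => c) k = c := by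
    intro k hk; simp [fext, hk]
  by_cases h : 0 < (i : ℕ) <;> by_cases h' : (i : ℕ) + 1 < n
  · rw [if_pos h, if_pos h', if_pos h, if_pos h', hf _ (by omega), hf _ h']; ring
  · rw [if_pos h, if_neg h', if_pos h, if_neg h', hf _ (by omega)]; ring
  · rw [if_neg h, if_pos h', if_neg h, if_pos h', hf _ h']; ring
  · rw [if_neg h, if_neg h', if_neg h, if_neg h']; ring

lemma iteOneMul (c : Prop) [Decidable c] (y : ℝ) :
    (if c then (1:ℝ) else 0) * y = if c then y else 0 := by
  by_cases h : c <;> simp [h]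

lemma sum_mulVec_mutT {n : ℕ} (w : Fin n → ℝ) :
    ∑ i, (mutT n).mulVec w i = 0 := by
  simp only [mulVec_mutT]
  rw [Finset.sum_sub_distrib, Finset.sum_add_distrib]
  have e1 : ∑ i : Fin n, (if 0 < (i : ℕ) then fext w ((i : ℕ) - 1) else 0)
      = ∑ i : Fin n, (if (i : ℕ) + 1 < n then fext w (i : ℕ) else 0) := by
    have h := shift_sum n (fun k => fext w (k - 1))
    simpa using h
  have e2 : ∑ i : Fin n,
      ((if 0 < (i : ℕ) then (1 : ℝ) else 0) + (if (i : ℕ) + 1 < n then (1 : ℝ) else 0)) * w i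
      = (∑ i : Fin n, (if 0 < (i : ℕ) then fext w (i : ℕ) else 0))
        + ∑ i : Fin n, (if (i : ℕ) + 1 < n then fext w (i : ℕ) else 0) := by
    rw [← Finset.sum_add_distrib]
    apply Finset.sum_congr rfl
    intro i _
    rw [add_mul, iteOneMul, iteOneMul, fext_coe]
  have e3 : ∑ i : Fin n, (if 0 < (i : ℕ) then fext w (i : ℕ) else 0)
      = ∑ i : Fin n, (if (i : ℕ) + 1 < n then fext w ((i : ℕ) + 1) else 0) :=
    shift_sum n (fun k => fext w k)
  rw [e1, e2, e3]
  ring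

/-- The edge (Dirichlet) energy of a vector. -/
def edgeE {n : ℕ} (w : Fin n → ℝ) : ℝ :=
  ∑ i : Fin n, if (i : ℕ) + 1 < n then (fext w ((i : ℕ) + 1) - fext w (i : ℕ))^2 else 0

lemma edgeE_nonneg {n : ℕ} (w : Fin n → ℝ) : 0 ≤ edgeE w := by
  apply Finset.sum_nonneg
  intro i _
  by_cases h : (i : ℕ) + 1 < n <;> simp [h] <;> positivity

lemma quad_mutT {n : ℕ} (w : Fin n → ℝ) :
    ∑ i, w i * (mutT n).mulVec w i = - edgeE w := by
  simp only [mulVec_mutT, edgeE]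
  have key : ∀ i : Fin n, w i *
      ((if 0 < (i : ℕ) then fext w ((i : ℕ) - 1) else 0)
        + (if (i : ℕ) + 1 < n then fext w ((i : ℕ) + 1) else 0)
        - ((if 0 < (i : ℕ) then (1 : ℝ) else 0) + (if (i : ℕ) + 1 < n then (1 : ℝ) else 0)) * w i)
      = (if 0 < (i : ℕ) then fext w (i : ℕ) * fext w ((i : ℕ) - 1) else 0)
        + (if (i : ℕ) + 1 < n then fext w (i : ℕ) * fext w ((i : ℕ) + 1) else 0)
        - ((if 0 < (i : ℕ) then (fext w (i : ℕ))^2 else 0)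
            + (if (i : ℕ) + 1 < n then (fext w (i : ℕ))^2 else 0)) := by
    intro i
    rw [← fext_coe w i]
    by_cases h : 0 < (i : ℕ) <;> by_cases h' : (i : ℕ) + 1 < n <;>
      simp [h, h'] <;> ring
  simp only [key]
  rw [Finset.sum_sub_distrib, Finset.sum_add_distrib, Finset.sum_add_distrib]
  have e1 : ∑ i : Fin n, (if 0 < (i : ℕ) then fext w (i : ℕ) * fext w ((i : ℕ) - 1) else 0)
      = ∑ i : Fin n, (if (i : ℕ) + 1 < n then fext w ((i : ℕ) + 1) * fext w (i : ℕ) else 0) := by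
    have h := shift_sum n (fun k => fext w k * fext w (k - 1))
    simpa using h
  have e2 : ∑ i : Fin n, (if 0 < (i : ℕ) then (fext w (i : ℕ))^2 else 0)
      = ∑ i : Fin n, (if (i : ℕ) + 1 < n then (fext w ((i : ℕ) + 1))^2 else 0) :=
    shift_sum n (fun k => (fext w k)^2)
  rw [e1, e2, ← Finset.sum_add_distrib, ← Finset.sum_add_distrib, ← Finset.sum_sub_distrib, ← Finset.sum_neg_distrib]
  apply Finset.sum_congr rfl
  intro i _
  by_cases h : (i : ℕ) + 1 < n <;> simp [h] <;> ring

lemma diff_sq_le {n : ℕ} (w : Fin n → ℝ) (i j : Fin n) :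
    (w i - w j)^2 ≤ (n : ℝ) * edgeE w := by
  -- wlog i ≤ j
  have key : ∀ i j : Fin n, (i : ℕ) ≤ (j : ℕ) → (w j - w i)^2 ≤ (n : ℝ) * edgeE w := by
    intro i j hij
    have tele : w j - w i = ∑ k ∈ Finset.Ico (i : ℕ) (j : ℕ), (fext w (k + 1) - fext w k) := by
      rw [Finset.sum_Ico_eq_sub _ hij, Finset.sum_range_sub (fext w), Finset.sum_range_sub (fext w),
        fext_coe, fext_coe]
      ring
    rw [tele]
    calc (∑ k ∈ Finset.Ico (i:ℕ) (j:ℕ), (fext w (k+1) - fext w k))^2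
        ≤ (Finset.Ico (i:ℕ) (j:ℕ)).card * ∑ k ∈ Finset.Ico (i:ℕ) (j:ℕ), (fext w (k+1) - fext w k)^2 :=
          sq_sum_le_card_mul_sum_sq
      _ ≤ (n : ℝ) * edgeE w := by
          apply mul_le_mul
          · rw [Nat.card_Ico]; exact_mod_cast Nat.le_of_lt_succ (by
              have := j.isLt; omega)
          · have hE : edgeE w = ∑ k ∈ Finset.range n,
                (if k + 1 < n then (fext w (k+1) - fext w k)^2 else 0) := by
              rw [edgeE, Fin.sum_univ_eq_sum_range (fun k => if k + 1 < n then (fext w (k+1) - fext w k)^2 else 0) n]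
            rw [hE]
            have hsub : Finset.Ico (i:ℕ) (j:ℕ) ⊆ Finset.range n := by
              intro k hk
              simp only [Finset.mem_Ico] at hk
              simp only [Finset.mem_range]
              have := j.isLt; omega
            calc ∑ k ∈ Finset.Ico (i:ℕ) (j:ℕ), (fext w (k+1) - fext w k)^2
                = ∑ k ∈ Finset.Ico (i:ℕ) (j:ℕ), (if k + 1 < n then (fext w (k+1) - fext w k)^2 else 0) := by
                  apply Finset.sum_congr rfl
                  intro k hk
                  simp only [Finset.mem_Ico] at hk
                  rw [if_pos (by have := j.isLt; omega)]
              _ ≤ ∑ k ∈ Finset.range n, (if k + 1 < n then (fext w (k+1) - fext w k)^2 else 0) := by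
                  apply Finset.sum_le_sum_of_subset_of_nonneg hsub
                  intro k _ _
                  by_cases h : k + 1 < n <;> simp [h] <;> positivity
          · apply Finset.sum_nonneg; intro k _; positivity
          · positivity
  rcases le_total (i : ℕ) (j : ℕ) with h | h
  · have := key i j h
    calc (w i - w j)^2 = (w j - w i)^2 := by ring
    _ ≤ _ := this
  · exact key j i h

lemma poincare {n : ℕ} (hn : 1 ≤ n) (w : Fin n → ℝ) (h0 : ∑ i, w i = 0) :
    ∑ i, (w i)^2 ≤ (n : ℝ)^2 * edgeE w := by
  have hnR : (0 : ℝ) < (n : ℝ) := by exact_mod_cast hn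
  have key : ∀ i : Fin n, (w i)^2 ≤ (n : ℝ) * edgeE w := by
    intro i
    have h1 : (n : ℝ) * w i = ∑ j : Fin n, (w i - w j) := by
      rw [Finset.sum_sub_distrib, h0, Finset.sum_const, Finset.card_univ, Fintype.card_fin]
      simp [nsmul_eq_mul]
    have h2 : ((n : ℝ) * w i)^2 ≤ (n : ℝ) * ((n : ℝ) * ((n : ℝ) * edgeE w)) := by
      rw [h1]
      calc (∑ j : Fin n, (w i - w j))^2
          ≤ (Finset.univ : Finset (Fin n)).card * ∑ j : Fin n, (w i - w j)^2 :=
            sq_sum_le_card_mul_sum_sq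
        _ ≤ (n : ℝ) * ((n : ℝ) * ((n : ℝ) * edgeE w)) := by
            rw [Finset.card_univ, Fintype.card_fin]
            apply mul_le_mul_of_nonneg_left _ (le_of_lt hnR)
            calc ∑ j : Fin n, (w i - w j)^2 ≤ ∑ _j : Fin n, (n : ℝ) * edgeE w :=
                  Finset.sum_le_sum (fun j _ => diff_sq_le w i j)
              _ = (n : ℝ) * ((n : ℝ) * edgeE w) := by
                  rw [Finset.sum_const, Finset.card_univ, Fintype.card_fin]; simp [nsmul_eq_mul]
    have h4 : (n:ℝ)^2 * (w i)^2 ≤ (n:ℝ)^2 * ((n:ℝ) * edgeE w) := by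
      calc (n:ℝ)^2 * (w i)^2 = ((n:ℝ) * w i)^2 := by ring
        _ ≤ (n:ℝ) * ((n:ℝ) * ((n:ℝ) * edgeE w)) := h2
        _ = (n:ℝ)^2 * ((n:ℝ) * edgeE w) := by ring
    exact le_of_mul_le_mul_left h4 (by positivity)
  calc ∑ i, (w i)^2 ≤ ∑ _i : Fin n, (n : ℝ) * edgeE w := Finset.sum_le_sum (fun i _ => key i)
    _ = (n : ℝ) * ((n : ℝ) * edgeE w) := by
        rw [Finset.sum_const, Finset.card_univ, Fintype.card_fin]; simp [nsmul_eq_mul]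
    _ = (n : ℝ)^2 * edgeE w := by ring


lemma hasDerivAt_mul_abs (y : ℝ) : HasDerivAt (fun z : ℝ => z * |z|) (2 * |y|) y := by
  rcases lt_trichotomy y 0 with hy | hy | hy
  · have h1 : HasDerivAt (fun z : ℝ => -(z^2)) (2 * |y|) y := by
      have := (hasDerivAt_pow 2 y).fun_neg
      simpa [abs_of_neg hy] using this.congr_deriv (by push_cast; ring)
    apply h1.congr_of_eventuallyEq
    filter_upwards [eventually_lt_nhds hy] with z hz
    rw [abs_of_neg hz]; ring
  · subst hy
    rw [hasDerivAt_iff_tendsto_slope]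
    have : ∀ z : ℝ, z ≠ 0 → slope (fun z : ℝ => z * |z|) 0 z = |z| := by
      intro z hz
      rw [slope_def_field]
      field_simp
      simp only [abs_zero, mul_zero, sub_zero]; ring
    have habs : Tendsto (fun z : ℝ => |z|) (𝓝[≠] (0:ℝ)) (𝓝 (0:ℝ)) := by
      have : Tendsto (fun z : ℝ => |z|) (𝓝 (0:ℝ)) (𝓝 (0:ℝ)) := by
        simpa using continuous_abs.tendsto (0:ℝ)
      exact this.mono_left nhdsWithin_le_nhds
    simp only [abs_zero, mul_zero]
    apply habs.congr'
    filter_upwards [self_mem_nhdsWithin] with z hz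
    exact (this z hz).symm
  · have h1 : HasDerivAt (fun z : ℝ => z^2) (2 * |y|) y := by
      have := hasDerivAt_pow 2 y
      simpa [abs_of_pos hy] using this.congr_deriv (by push_cast; ring)
    apply h1.congr_of_eventuallyEq
    filter_upwards [eventually_gt_nhds hy] with z hz
    rw [abs_of_pos hz]; ring

lemma hasDerivAt_negsq (y : ℝ) :
    HasDerivAt (fun z : ℝ => (min z 0)^2) (2 * min y 0) y := by
  have hrepr : ∀ z : ℝ, (min z 0)^2 = (z^2 - z * |z|) / 2 := by
    intro z
    rcases le_total z 0 with hz | hz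
    · rw [min_eq_left hz, abs_of_nonpos hz]; ring
    · rw [min_eq_right hz, abs_of_nonneg hz]; ring
  have h1 : HasDerivAt (fun z : ℝ => (z^2 - z * |z|) / 2) (2 * min y 0) y := by
    have h2 := ((hasDerivAt_pow 2 y).sub (hasDerivAt_mul_abs y)).div_const 2
    apply h2.congr_deriv
    rcases le_total y 0 with hz | hz
    · rw [min_eq_left hz, abs_of_nonpos hz]; push_cast; ring
    · rw [min_eq_right hz, abs_of_nonneg hz]; push_cast; ring
  exact h1.congr_of_eventuallyEq (Eventually.of_forall hrepr)

/-- antitone on `[a,b]` from nonpositive derivative -/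
lemma anti_on_Icc {a b : ℝ} {f f' : ℝ → ℝ}
    (hd : ∀ t ∈ Icc a b, HasDerivAt f (f' t) t)
    (h0 : ∀ t ∈ Icc a b, f' t ≤ 0) :
    ∀ t₁ ∈ Icc a b, ∀ t₂ ∈ Icc a b, t₁ ≤ t₂ → f t₂ ≤ f t₁ := by
  intro t₁ h₁ t₂ h₂ h12
  have h := antitoneOn_of_deriv_nonpos (convex_Icc a b)
    (fun t ht => (hd t ht).continuousAt.continuousWithinAt)
    (fun t ht => (hd t (interior_subset ht)).differentiableAt.differentiableWithinAt)
    (fun t ht => by rw [(hd t (interior_subset ht)).deriv]; exact h0 t (interior_subset ht))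
  exact h h₁ h₂ h12

lemma monod_nonneg {m a s : ℝ} (hm : 0 < m) (ha : 0 < a) (hs : 0 ≤ s) : 0 ≤ monod m a s := by
  unfold monod; positivity

lemma monod_mono {m a : ℝ} (hm : 0 < m) (ha : 0 < a) {s₁ s₂ : ℝ} (h0 : 0 ≤ s₁) (h : s₁ ≤ s₂) :
    monod m a s₁ ≤ monod m a s₂ := by
  unfold monod
  rw [div_le_div_iff₀ (by linarith) (by linarith)]
  nlinarith [mul_le_mul_of_nonneg_left h (le_of_lt (mul_pos hm ha))]

lemma monod_le_slope {m a s : ℝ} (hm : 0 < m) (ha : 0 < a) (hs : 0 ≤ s) :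
    monod m a s ≤ (m / a) * s := by
  unfold monod
  rw [div_le_iff₀ (by linarith)]
  rw [div_mul_eq_mul_div, div_mul_eq_mul_div, le_div_iff₀ ha]
  nlinarith [mul_nonneg (mul_nonneg hm.le hs) hs]

lemma monod_nonpos {m a s : ℝ} (hm : 0 < m) (ha : 0 < a) (hs : s ≤ 0) (h2 : -a < s) :
    monod m a s ≤ 0 := by
  unfold monod
  apply div_nonpos_of_nonpos_of_nonneg
  · nlinarith
  · linarith

lemma monod_pos {m a s : ℝ} (hm : 0 < m) (ha : 0 < a) (hs : 0 < s) : 0 < monod m a s := by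
  unfold monod; positivity

lemma monod_continuousAt {m a s : ℝ} (h : a + s ≠ 0) : ContinuousAt (monod m a) s := by
  have : monod m a = fun z => m * z / (a + z) := rfl
  rw [this]
  apply ContinuousAt.div
  · exact (continuous_const.mul continuous_id).continuousAt
  · exact (continuous_const.add continuous_id).continuousAt
  · simpa using h


lemma min_mul_self (y : ℝ) : min y 0 * y = (min y 0)^2 := by
  rcases le_total y 0 with h | h
  · rw [min_eq_left h]; ring
  · rw [min_eq_right h]; ring

set_option maxHeartbeats 1000000 in
lemma Vzero (n : ℕ) (hn : 1 ≤ n) (m a : Fin n → ℝ)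
    (hm : ∀ i, 0 < m i) (ha : ∀ i, 0 < a i) (ε : ℝ) (hε : 0 < ε)
    (x : ℝ → Fin n → ℝ) (s : ℝ → ℝ) (hsol : IsSol n m a ε 0 x s)
    (hx0 : ∀ i, 0 ≤ x 0 i) (hs0 : 0 ≤ s 0)
    (η : ℝ) (hη : 0 < η) (hηa : ∀ i, 2*η ≤ a i)
    (τ : ℝ) (hτ : 0 ≤ τ) (hslb : ∀ t ∈ Icc (0:ℝ) τ, -η ≤ s t) :
    ∀ t ∈ Icc (0:ℝ) τ, (∀ i, 0 ≤ x t i) ∧ 0 ≤ s t := by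
  classical
  -- continuity of the kinetic coefficients along the solution
  have hsc : ∀ t ∈ Icc (0:ℝ) τ, ContinuousAt s t := fun t ht => ((hsol t ht.1).2).continuousAt
  have hden : ∀ (i : Fin n), ∀ t ∈ Icc (0:ℝ) τ, a i + s t ≠ 0 := by
    intro i t ht
    have h1 := hslb t ht
    have h2 := hηa i
    intro hc; rw [add_eq_zero_iff_eq_neg] at hc; linarith
  have hμc : ContinuousOn (fun t => (fun i => monod (m i) (a i) (s t))) (Icc (0:ℝ) τ) := by
    apply continuousOn_pi.2
    intro i t ht
    exact ((monod_continuousAt (hden i t ht)).comp (hsc t ht)).continuousWithinAt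
  obtain ⟨M0, hM0⟩ := isCompact_Icc.exists_bound_of_continuousOn hμc
  set M := max M0 0 with hMdef
  have hMnn : 0 ≤ M := le_max_right _ _
  have hMb : ∀ t ∈ Icc (0:ℝ) τ, ∀ i, |monod (m i) (a i) (s t)| ≤ M := by
    intro t ht i
    calc |monod (m i) (a i) (s t)| = ‖(fun i => monod (m i) (a i) (s t)) i‖ := rfl
      _ ≤ ‖(fun i => monod (m i) (a i) (s t))‖ := norm_le_pi_norm (fun i => monod (m i) (a i) (s t)) i
      _ ≤ M0 := hM0 t ht
      _ ≤ M := le_max_left _ _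
  set K := 2*M + 2*ε + 2*ε*(n:ℝ) + M + M*(n:ℝ) with hKdef
  have hKnn : 0 ≤ K := by positivity
  -- the derivative expressions
  set Dx : Fin n → ℝ → ℝ := fun i t =>
    (monod (m i) (a i) (s t) - 0) * x t i + ε * (mutT n).mulVec (x t) i with hDx
  set Ds : ℝ → ℝ := fun t => -(∑ j, monod (m j) (a j) (s t) * x t j) + 0 * (1 - s t) with hDs
  have hx' : ∀ t, 0 ≤ t → ∀ i, HasDerivAt (fun τ => x τ i) (Dx i t) t :=
    fun t ht i => (hsol t ht).1 i
  have hs' : ∀ t, 0 ≤ t → HasDerivAt s (Ds t) t := fun t ht => (hsol t ht).2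
  -- Lyapunov function
  set V : ℝ → ℝ := fun t => (∑ i, (min (x t i) 0)^2) + (min (s t) 0)^2 with hVdef
  set V' : ℝ → ℝ := fun t => (∑ i, 2 * min (x t i) 0 * Dx i t) + 2 * min (s t) 0 * Ds t with hV'def
  have hVd : ∀ t ∈ Icc (0:ℝ) τ, HasDerivAt V (V' t) t := by
    intro t ht
    apply HasDerivAt.add
    · apply HasDerivAt.fun_sum
      intro i _
      exact (hasDerivAt_negsq (x t i)).comp t (hx' t ht.1 i)
    · exact (hasDerivAt_negsq (s t)).comp t (hs' t ht.1)
  have hVnn : ∀ t, 0 ≤ V t := by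
    intro t
    apply add_nonneg _ (sq_nonneg _)
    exact Finset.sum_nonneg (fun i _ => sq_nonneg _)
  -- the key differential inequality
  have hVK : ∀ t ∈ Icc (0:ℝ) τ, V' t ≤ K * V t := by
    intro t ht
    set Q : ℝ := ∑ i, (min (x t i) 0)^2 with hQdef
    have hQnn : 0 ≤ Q := Finset.sum_nonneg (fun i _ => sq_nonneg _)
    set ms : ℝ := min (s t) 0 with hmsdef
    have hmsle : ms ≤ 0 := min_le_right _ _
    have hQi : ∀ k : ℕ, k < n → (min (fext (x t) k) 0)^2 ≤ Q := by
      intro k hk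
      have : fext (x t) k = x t ⟨k, hk⟩ := by simp [fext, hk]
      rw [this, hQdef]
      exact Finset.single_le_sum (fun i _ => sq_nonneg (min (x t i) 0)) (Finset.mem_univ _)
    have hterm : ∀ i : Fin n, 2 * min (x t i) 0 * Dx i t
        ≤ (2*M + 2*ε) * (min (x t i) 0)^2 + 2*ε*Q := by
      intro i
      set mi : ℝ := min (x t i) 0 with hmidef
      have hmile : mi ≤ 0 := min_le_right _ _
      have hmix : mi * x t i = mi^2 := min_mul_self (x t i)
      have hμ := hMb t ht i
      set μ : ℝ := monod (m i) (a i) (s t) with hμdef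
      have hμle : μ ≤ M := le_of_abs_le hμ
      rw [hDx]
      simp only [sub_zero]
      rw [mulVec_mutT]
      set P : ℝ := if 0 < (i:ℕ) then fext (x t) ((i:ℕ)-1) else 0 with hPdef
      set N : ℝ := if (i:ℕ)+1 < n then fext (x t) ((i:ℕ)+1) else 0 with hNdef
      set d : ℝ := (if 0 < (i:ℕ) then (1:ℝ) else 0) + (if (i:ℕ)+1 < n then (1:ℝ) else 0) with hddef
      have hdnn : 0 ≤ d := by
        rw [hddef]; apply add_nonneg <;> [skip; skip] <;> positivity
      have hPb : 2 * (mi * P) ≤ mi^2 + Q := by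
        rw [hPdef]
        by_cases h : 0 < (i:ℕ)
        · rw [if_pos h]
          set z : ℝ := fext (x t) ((i:ℕ)-1) with hzdef
          have hz : (min z 0)^2 ≤ Q := hQi _ (by have := i.isLt; omega)
          have h1 : mi * z ≤ mi * min z 0 := mul_le_mul_of_nonpos_left (min_le_left z 0) hmile
          nlinarith [sq_nonneg (mi - min z 0)]
        · rw [if_neg h]; nlinarith
      have hNb : 2 * (mi * N) ≤ mi^2 + Q := by
        rw [hNdef]
        by_cases h : (i:ℕ)+1 < n
        · rw [if_pos h]
          set z : ℝ := fext (x t) ((i:ℕ)+1) with hzdef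
          have hz : (min z 0)^2 ≤ Q := hQi _ h
          have h1 : mi * z ≤ mi * min z 0 := mul_le_mul_of_nonpos_left (min_le_left z 0) hmile
          nlinarith [sq_nonneg (mi - min z 0)]
        · rw [if_neg h]; nlinarith
      have hA : 2 * mi * (μ * x t i) ≤ 2*M*mi^2 := by
        have : 2 * mi * (μ * x t i) = 2 * μ * (mi * x t i) := by ring
        rw [this, hmix]
        nlinarith [sq_nonneg mi]
      have hD : 2 * mi * (ε * (-(d * x t i))) ≤ 0 := by
        have : 2 * mi * (ε * (-(d * x t i))) = -(2 * ε * d * (mi * x t i)) := by ring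
        rw [this, hmix]
        have : 0 ≤ 2 * ε * d * mi^2 := by positivity
        linarith
      have expand : 2 * mi * (μ * x t i + ε * (P + N - d * x t i))
          = 2 * mi * (μ * x t i) + ε * (2 * (mi * P)) + ε * (2 * (mi * N))
            + 2 * mi * (ε * (-(d * x t i))) := by ring
      calc 2 * mi * (μ * x t i + ε * (P + N - d * x t i))
          ≤ 2*M*mi^2 + ε * (mi^2 + Q) + ε * (mi^2 + Q) + 0 := by
            rw [expand]
            exact add_le_add (add_le_add (add_le_add hA
              (mul_le_mul_of_nonneg_left hPb hε.le))
              (mul_le_mul_of_nonneg_left hNb hε.le)) hD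
        _ = (2*M + 2*ε) * mi^2 + 2*ε*Q := by ring
    have hsum : ∑ i, 2 * min (x t i) 0 * Dx i t ≤ (2*M + 2*ε) * Q + 2*ε*(n:ℝ)*Q := by
      calc ∑ i, 2 * min (x t i) 0 * Dx i t
          ≤ ∑ i, ((2*M + 2*ε) * (min (x t i) 0)^2 + 2*ε*Q) :=
            Finset.sum_le_sum (fun i _ => hterm i)
        _ = (2*M + 2*ε) * Q + (n:ℝ) * (2*ε*Q) := by
            rw [Finset.sum_add_distrib, ← Finset.mul_sum, Finset.sum_const, Finset.card_univ,
              Fintype.card_fin, nsmul_eq_mul, ← hQdef]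
        _ = (2*M + 2*ε) * Q + 2*ε*(n:ℝ)*Q := by ring
    have hsterm : 2 * ms * Ds t ≤ M*(n:ℝ)*ms^2 + M*Q := by
      rw [hDs]
      have : 2 * ms * (-(∑ j, monod (m j) (a j) (s t) * x t j) + 0 * (1 - s t))
          = ∑ j, (-2) * ms * (monod (m j) (a j) (s t) * x t j) := by
        rw [← Finset.mul_sum]; ring
      rw [this]
      have hjb : ∀ j : Fin n, (-2) * ms * (monod (m j) (a j) (s t) * x t j)
          ≤ M * (ms^2 + (min (x t j) 0)^2) := by
        intro j
        rcases le_or_gt 0 (s t) with hst | hst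
        · have : ms = 0 := min_eq_right hst
          rw [this]
          have : 0 ≤ M * (0^2 + (min (x t j) 0)^2) := by positivity
          simpa using this
        · set μ : ℝ := monod (m j) (a j) (s t) with hμdef
          have hμle : μ ≤ 0 := by
            apply monod_nonpos (hm j) (ha j) (le_of_lt hst)
            have h1 := hslb t ht
            have h2 := hηa j
            linarith
          have hμge : -M ≤ μ := neg_le_of_abs_le (hMb t ht j)
          set mj : ℝ := min (x t j) 0 with hmjdef
          have hmjle : mj ≤ 0 := min_le_right _ _
          have hmjx : mj ≤ x t j := min_le_left _ _
          have r1 : (-2) * ms * (μ * (x t j - mj)) ≤ 0 := by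
            have h1 : 0 ≤ -ms := by linarith
            have h2 : 0 ≤ x t j - mj := by linarith
            have := mul_nonneg (mul_nonneg (by linarith : (0:ℝ) ≤ 2 * (-ms)) (neg_nonneg.2 hμle)) h2
            nlinarith
          have r2 : (-2) * ms * (μ * mj) ≤ M * (ms^2 + mj^2) := by
            have h1 : 0 ≤ ms * mj := by nlinarith
            have h2 : 2 * (ms * mj) ≤ ms^2 + mj^2 := by nlinarith [sq_nonneg (ms - mj)]
            have h3 : (-2) * ms * (μ * mj) = (-μ) * (2 * (ms * mj)) := by ring
            rw [h3]
            calc (-μ) * (2 * (ms * mj)) ≤ M * (2 * (ms * mj)) := by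
                  apply mul_le_mul_of_nonneg_right _ (by linarith)
                  linarith
              _ ≤ M * (ms^2 + mj^2) := by
                  apply mul_le_mul_of_nonneg_left h2 hMnn
          calc (-2) * ms * (μ * x t j)
              = (-2) * ms * (μ * (x t j - mj)) + (-2) * ms * (μ * mj) := by ring
            _ ≤ 0 + M * (ms^2 + mj^2) := add_le_add r1 r2
            _ = M * (ms^2 + mj^2) := by ring
      calc ∑ j, (-2) * ms * (monod (m j) (a j) (s t) * x t j)
          ≤ ∑ j, M * (ms^2 + (min (x t j) 0)^2) := Finset.sum_le_sum (fun j _ => hjb j)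
        _ = M*(n:ℝ)*ms^2 + M*Q := by
            simp only [mul_add, Finset.sum_add_distrib, Finset.sum_const, Finset.card_univ,
              Fintype.card_fin, nsmul_eq_mul, ← Finset.mul_sum, ← hQdef]
            ring
    have hfin : V' t ≤ K * (Q + ms^2) := by
      rw [hV'def]
      have e1 : (2*M + 2*ε) * Q + 2*ε*(n:ℝ)*Q ≤ (2*M + 2*ε + 2*ε*(n:ℝ)) * Q := by ring_nf; linarith
      have c1 : (2*M + 2*ε + 2*ε*(n:ℝ)) + M ≤ K := by rw [hKdef]; nlinarith [mul_nonneg hMnn (Nat.cast_nonneg (α := ℝ) n)]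
      have c2 : M*(n:ℝ) ≤ K := by rw [hKdef]; nlinarith [mul_nonneg hMnn (Nat.cast_nonneg (α := ℝ) n), mul_nonneg hε.le (Nat.cast_nonneg (α := ℝ) n), hMnn, hε.le]
      have hms2 : 0 ≤ ms^2 := sq_nonneg _
      calc (∑ i, 2 * min (x t i) 0 * Dx i t) + 2 * ms * Ds t
          ≤ ((2*M + 2*ε) * Q + 2*ε*(n:ℝ)*Q) + (M*(n:ℝ)*ms^2 + M*Q) := add_le_add hsum hsterm
        _ ≤ K * Q + K * ms^2 := by nlinarith [mul_le_mul_of_nonneg_right c1 hQnn,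
            mul_le_mul_of_nonneg_right c2 hms2]
        _ = K * (Q + ms^2) := by ring
    calc V' t ≤ K * (Q + ms^2) := hfin
      _ = K * V t := by rw [hVdef]
  -- exponential comparison
  set W : ℝ → ℝ := fun t => Real.exp (-K * t) * V t with hWdef
  have hWd : ∀ t ∈ Icc (0:ℝ) τ, HasDerivAt W
      (-K * Real.exp (-K * t) * V t + Real.exp (-K * t) * V' t) t := by
    intro t ht
    have hexp : HasDerivAt (fun t : ℝ => Real.exp (-K * t)) (-K * Real.exp (-K * t)) t := by
      have h1 : HasDerivAt (fun t : ℝ => -K * t) (-K) t := by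
        simpa using (hasDerivAt_id t).const_mul (-K)
      have := (Real.hasDerivAt_exp (-K * t)).comp t h1
      exact this.congr_deriv (by ring)
    exact hexp.mul (hVd t ht)
  have hWanti : ∀ t ∈ Icc (0:ℝ) τ, W t ≤ W 0 := by
    intro t ht
    exact anti_on_Icc hWd (by
      intro t' ht'
      have h1 := hVK t' ht'
      have h2 : (0:ℝ) < Real.exp (-K * t') := Real.exp_pos _
      nlinarith [hVnn t']) 0 ⟨le_refl 0, hτ⟩ t ht ht.1
  have hW0 : W 0 = 0 := by
    rw [hWdef]
    simp only
    have h1 : ∀ i, min (x 0 i) 0 = 0 := fun i => min_eq_right (hx0 i)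
    have h2 : min (s 0) 0 = 0 := min_eq_right hs0
    rw [hVdef]
    simp [h1, h2]
  have hVzero : ∀ t ∈ Icc (0:ℝ) τ, V t = 0 := by
    intro t ht
    have h1 := hWanti t ht
    rw [hW0] at h1
    have h2 : 0 < Real.exp (-K * t) := Real.exp_pos _
    have h3 := hVnn t
    rw [hWdef] at h1
    simp only at h1
    nlinarith
  intro t ht
  have hV0 := hVzero t ht
  rw [hVdef] at hV0
  simp only at hV0
  have hQnn : (0:ℝ) ≤ ∑ i, (min (x t i) 0)^2 := Finset.sum_nonneg (fun i _ => sq_nonneg _)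
  have hms : (min (s t) 0)^2 = 0 := by nlinarith [sq_nonneg (min (s t) 0)]
  have hQ : ∑ i, (min (x t i) 0)^2 = 0 := by nlinarith [sq_nonneg (min (s t) 0)]
  constructor
  · intro i
    have := (Finset.sum_eq_zero_iff_of_nonneg (fun i _ => sq_nonneg (min (x t i) 0))).1 hQ i
      (Finset.mem_univ i)
    have hmin : min (x t i) 0 = 0 := by
      have := sq_eq_zero_iff.1 this
      exact this
    exact min_eq_right_iff.1 hmin
  · have hmin : min (s t) 0 = 0 := sq_eq_zero_iff.1 hms
    exact min_eq_right_iff.1 hmin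


lemma invariance (n : ℕ) (hn : 1 ≤ n) (m a : Fin n → ℝ)
    (hm : ∀ i, 0 < m i) (ha : ∀ i, 0 < a i) (ε : ℝ) (hε : 0 < ε)
    (x : ℝ → Fin n → ℝ) (s : ℝ → ℝ) (hsol : IsSol n m a ε 0 x s)
    (hx0 : ∀ i, 0 ≤ x 0 i) (hs0 : 0 ≤ s 0) :
    ∀ t, 0 ≤ t → (∀ i, 0 ≤ x t i) ∧ 0 ≤ s t := by
  have hn0 : 0 < n := hn
  have hne : (Finset.univ : Finset (Fin n)).Nonempty := ⟨⟨0, hn0⟩, Finset.mem_univ _⟩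
  set η : ℝ := (Finset.univ.inf' hne a) / 2 with hηdef
  have hη : 0 < η := by
    rw [hηdef]
    have : 0 < Finset.univ.inf' hne a := by
      rw [Finset.lt_inf'_iff]
      exact fun i _ => ha i
    linarith
  have hηa : ∀ i, 2*η ≤ a i := by
    intro i
    rw [hηdef]
    have := Finset.inf'_le a (Finset.mem_univ i)
    linarith
  intro t ht
  set B : Set ℝ := {r | r ∈ Icc (0:ℝ) t ∧ s r ≤ -η} with hBdef
  by_cases hB : B.Nonempty
  · exfalso
    have hscont : ContinuousOn s (Icc (0:ℝ) t) :=
      fun r hr => ((hsol r hr.1).2).continuousAt.continuousWithinAt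
    have hBclosed : IsClosed B := by
      have : B = Icc (0:ℝ) t ∩ s ⁻¹' (Iic (-η)) := by
        ext r; simp [hBdef, and_comm]
      rw [this]
      exact hscont.preimage_isClosed_of_isClosed isClosed_Icc isClosed_Iic
    have hbdd : BddBelow B := ⟨0, fun r hr => hr.1.1⟩
    set ts : ℝ := sInf B with htsdef
    have hts : ts ∈ B := hBclosed.csInf_mem hB hbdd
    have hts0 : 0 < ts := by
      rcases lt_or_eq_of_le hts.1.1 with h | h
      · exact h
      · exfalso; have := hts.2; rw [← h] at this; linarith
    have hbefore : ∀ r ∈ Ico (0:ℝ) ts, -η < s r := by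
      intro r hr
      by_contra hcon
      push_neg at hcon
      have hrB : r ∈ B := ⟨⟨hr.1, le_trans hr.2.le hts.1.2⟩, hcon⟩
      have := csInf_le hbdd hrB
      exact absurd this (not_le.2 hr.2)
    have hatstar : -η ≤ s ts := by
      have hclos : ts ∈ closure (Ico (0:ℝ) ts) := by
        rw [closure_Ico (ne_of_lt hts0)]
        exact ⟨hts0.le, le_refl _⟩
      have hne2 : (𝓝[Ico (0:ℝ) ts] ts).NeBot := mem_closure_iff_nhdsWithin_neBot.1 hclos
      have htd : Tendsto s (𝓝[Ico (0:ℝ) ts] ts) (𝓝 (s ts)) :=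
        ((hsol ts hts0.le).2).continuousAt.continuousWithinAt
      exact ge_of_tendsto htd (eventually_nhdsWithin_of_forall (fun r hr => (hbefore r hr).le))
    have hslb : ∀ r ∈ Icc (0:ℝ) ts, -η ≤ s r := by
      intro r hr
      rcases lt_or_eq_of_le hr.2 with h | h
      · exact (hbefore r ⟨hr.1, h⟩).le
      · rw [h]; exact hatstar
    have := (Vzero n hn m a hm ha ε hε x s hsol hx0 hs0 η hη hηa ts hts0.le hslb
      ts ⟨hts0.le, le_refl _⟩).2
    have h2 := hts.2
    linarith
  · have hslb : ∀ r ∈ Icc (0:ℝ) t, -η ≤ s r := by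
      intro r hr
      by_contra hcon
      push_neg at hcon
      exact hB ⟨r, hr, hcon.le⟩
    exact Vzero n hn m a hm ha ε hε x s hsol hx0 hs0 η hη hηa t ht hslb t ⟨ht, le_refl _⟩


section MainFacts

variable {n : ℕ} {m a : Fin n → ℝ} {ε : ℝ} {x : ℝ → Fin n → ℝ} {s : ℝ → ℝ}

lemma conservation (hsol : IsSol n m a ε 0 x s) :
    ∀ t, 0 ≤ t → s t + ∑ i, x t i = s 0 + ∑ i, x 0 i := by
  have hder : ∀ t ∈ Ici (0:ℝ), HasDerivAt (fun r => s r + ∑ i, x r i) 0 t := by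
    intro t ht
    have h1 := (hsol t ht).2
    have h2 : HasDerivAt (fun r => ∑ i, x r i)
        (∑ i, ((monod (m i) (a i) (s t) - 0) * x t i + ε * (mutT n).mulVec (x t) i)) t :=
      HasDerivAt.fun_sum (fun i _ => (hsol t ht).1 i)
    have h3 := h1.fun_add h2
    refine h3.congr_deriv ?_
    rw [Finset.sum_add_distrib, ← Finset.mul_sum, sum_mulVec_mutT]
    simp only [sub_zero]
    ring
  intro t ht
  have h1 := anti_on_Icc (f' := fun _ => (0:ℝ))
    (fun r hr => hder r (mem_Ici.2 hr.1)) (fun r _ => le_refl 0) 0 ⟨le_refl 0, ht⟩ t ⟨ht, le_refl t⟩ ht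
  have h2 := anti_on_Icc (f := fun r => -(s r + ∑ i, x r i)) (f' := fun _ => (0:ℝ))
    (fun r hr => by simpa using (hder r (mem_Ici.2 hr.1)).fun_neg) (fun r _ => le_refl 0)
    0 ⟨le_refl 0, ht⟩ t ⟨ht, le_refl t⟩ ht
  simp only [neg_le_neg_iff] at h2
  linarith

lemma s_antitone (hm : ∀ i, 0 < m i) (ha : ∀ i, 0 < a i)
    (hsol : IsSol n m a ε 0 x s)
    (hpos : ∀ t, 0 ≤ t → (∀ i, 0 ≤ x t i) ∧ 0 ≤ s t) :
    ∀ t₁ t₂, 0 ≤ t₁ → t₁ ≤ t₂ → s t₂ ≤ s t₁ := by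
  intro t₁ t₂ h1 h12
  have := anti_on_Icc (f := s)
    (f' := fun r => -(∑ j, monod (m j) (a j) (s r) * x r j) + 0 * (1 - s r))
    (fun r hr => (hsol r (le_trans h1 hr.1)).2)
    (fun r hr => by
      have hr0 : 0 ≤ r := le_trans h1 hr.1
      have hsum : 0 ≤ ∑ j, monod (m j) (a j) (s r) * x r j :=
        Finset.sum_nonneg (fun j _ => mul_nonneg
          (monod_nonneg (hm j) (ha j) ((hpos r hr0).2)) ((hpos r hr0).1 j))
      simp only [zero_mul, add_zero]
      linarith)
    t₁ ⟨le_refl _, h12⟩ t₂ ⟨h12, le_refl _⟩ h12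
  exact this

lemma sum_x0_pos (hx0 : ∀ i, 0 ≤ x 0 i) (hx0ne : x 0 ≠ 0) : 0 < ∑ i, x 0 i := by
  rcases Function.ne_iff.1 hx0ne with ⟨i, hi⟩
  have hipos : 0 < x 0 i := lt_of_le_of_ne (hx0 i) (by simpa using (Ne.symm hi))
  calc (0:ℝ) < x 0 i := hipos
    _ ≤ ∑ j, x 0 j := Finset.single_le_sum (fun j _ => hx0 j) (Finset.mem_univ i)

lemma s_tendsto_zero (hn : 1 ≤ n) (hm : ∀ i, 0 < m i) (ha : ∀ i, 0 < a i) (hε : 0 < ε)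
    (hsol : IsSol n m a ε 0 x s)
    (hpos : ∀ t, 0 ≤ t → (∀ i, 0 ≤ x t i) ∧ 0 ≤ s t)
    (hx0 : ∀ i, 0 ≤ x 0 i) (hx0ne : x 0 ≠ 0) :
    Tendsto s atTop (𝓝 0) := by
  have hsig0 : 0 < ∑ i, x 0 i := sum_x0_pos hx0 hx0ne
  have hanti := s_antitone hm ha hsol hpos
  have hkey : ∀ u : ℝ, 0 < u → ∃ t₀, 0 ≤ t₀ ∧ s t₀ < u := by
    intro u hu
    by_contra hcon
    push_neg at hcon
    -- then s r ≥ u for all r ≥ 0, and s decreases at a uniform rate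
    have hne : (Finset.univ : Finset (Fin n)).Nonempty := ⟨⟨0, hn⟩, Finset.mem_univ _⟩
    set c : ℝ := Finset.univ.inf' hne (fun j => monod (m j) (a j) u) with hcdef
    have hc : 0 < c := by
      rw [hcdef, Finset.lt_inf'_iff]
      exact fun j _ => monod_pos (hm j) (ha j) hu
    have hrate : ∀ r, 0 ≤ r →
        (-(∑ j, monod (m j) (a j) (s r) * x r j) + 0 * (1 - s r)) ≤ -(c * (∑ i, x 0 i)) := by
      intro r hr
      have hsr : u ≤ s r := hcon r hr
      have hxb : ∑ i, x 0 i ≤ ∑ i, x r i := by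
        have hc1 := conservation hsol r hr
        have hs1 := hanti 0 r (le_refl 0) hr
        linarith
      have hlb : c * (∑ i, x 0 i) ≤ ∑ j, monod (m j) (a j) (s r) * x r j := by
        calc c * (∑ i, x 0 i) ≤ c * (∑ i, x r i) := by
              apply mul_le_mul_of_nonneg_left hxb hc.le
          _ = ∑ j, c * x r j := Finset.mul_sum _ _ _
          _ ≤ ∑ j, monod (m j) (a j) (s r) * x r j := by
              apply Finset.sum_le_sum
              intro j _
              apply mul_le_mul_of_nonneg_right _ ((hpos r hr).1 j)
              calc c ≤ monod (m j) (a j) u := Finset.inf'_le _ (Finset.mem_univ j)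
                _ ≤ monod (m j) (a j) (s r) := monod_mono (hm j) (ha j) hu.le hsr
      linarith
    -- so s r + c σ0 r is antitone, hence s becomes negative : contradiction
    set T : ℝ := (s 0 + 1) / (c * (∑ i, x 0 i)) with hTdef
    have hcσ : 0 < c * (∑ i, x 0 i) := mul_pos hc hsig0
    have hs00 : 0 ≤ s 0 := (hpos 0 le_rfl).2
    have hT : 0 ≤ T := div_nonneg (by linarith) hcσ.le
    have := anti_on_Icc (f := fun r => s r + (c * (∑ i, x 0 i)) * r)
      (f' := fun r => (-(∑ j, monod (m j) (a j) (s r) * x r j) + 0 * (1 - s r))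
        + (c * (∑ i, x 0 i)))
      (fun r hr => ((hsol r hr.1).2).add (by
        simpa using (hasDerivAt_id r).const_mul (c * (∑ i, x 0 i))))
      (fun r hr => by have := hrate r hr.1; linarith)
      0 ⟨le_refl 0, hT⟩ T ⟨hT, le_refl _⟩ hT
    have hsT : 0 ≤ s T := (hpos T hT).2
    have hTv : (c * (∑ i, x 0 i)) * T = s 0 + 1 := by
      rw [hTdef]; field_simp
    rw [hTv] at this
    simp only [mul_zero, add_zero] at this
    linarith
  rw [tendsto_order]
  constructor
  · intro l hl
    filter_upwards [eventually_ge_atTop (0:ℝ)] with t ht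
    have := (hpos t ht).2
    linarith
  · intro u hu
    obtain ⟨t₀, ht₀, hst₀⟩ := hkey u hu
    filter_upwards [eventually_ge_atTop t₀] with t ht
    calc s t ≤ s t₀ := hanti t₀ t ht₀ ht
      _ < u := hst₀

end MainFacts


lemma decay_to_zero {g g' r : ℝ → ℝ} {c : ℝ} (hc : 0 < c)
    (hg : ∀ t, 0 ≤ t → HasDerivAt g (g' t) t)
    (hgnn : ∀ t, 0 ≤ t → 0 ≤ g t)
    (hineq : ∀ t, 0 ≤ t → g' t ≤ -c * g t + r t)
    (hrnn : ∀ t, 0 ≤ t → 0 ≤ r t)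
    (hranti : ∀ t₁ t₂, 0 ≤ t₁ → t₁ ≤ t₂ → r t₂ ≤ r t₁)
    (hr0 : Tendsto r atTop (𝓝 0)) :
    Tendsto g atTop (𝓝 0) := by
  rw [Metric.tendsto_atTop]
  intro δ hδ
  have hev : ∀ᶠ t in atTop, r t < c * δ / 2 ∧ (0:ℝ) ≤ t := by
    filter_upwards [hr0.eventually (gt_mem_nhds (by positivity : (0:ℝ) < c * δ / 2)),
      eventually_ge_atTop (0:ℝ)] with t h1 h2
    exact ⟨h1, h2⟩
  obtain ⟨t₀, hrt₀, ht₀⟩ := hev.exists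
  have key : ∀ t, t₀ ≤ t → g t ≤ r t₀ / c + Real.exp (c * t₀ - c * t) * g t₀ := by
    intro t htt
    have hφd : ∀ τ ∈ Icc t₀ t, HasDerivAt (fun τ => Real.exp (c * τ) * (g τ - r t₀ / c))
        (c * Real.exp (c * τ) * (g τ - r t₀ / c) + Real.exp (c * τ) * g' τ) τ := by
      intro τ hτ
      have hexp : HasDerivAt (fun τ : ℝ => Real.exp (c * τ)) (c * Real.exp (c * τ)) τ := by
        have h1 : HasDerivAt (fun τ : ℝ => c * τ) c τ := by
          simpa using (hasDerivAt_id τ).const_mul c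
        have := (Real.hasDerivAt_exp (c * τ)).comp τ h1
        exact this.congr_deriv (by ring)
      exact hexp.mul ((hg τ (le_trans ht₀ hτ.1)).sub_const _)
    have hφ0 : ∀ τ ∈ Icc t₀ t,
        c * Real.exp (c * τ) * (g τ - r t₀ / c) + Real.exp (c * τ) * g' τ ≤ 0 := by
      intro τ hτ
      have hτ0 : 0 ≤ τ := le_trans ht₀ hτ.1
      have h1 := hineq τ hτ0
      have h2 : r τ ≤ r t₀ := hranti t₀ τ ht₀ hτ.1
      have h3 : 0 < Real.exp (c * τ) := Real.exp_pos _
      have h4 : c * (r t₀ / c) = r t₀ := by field_simp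
      calc c * Real.exp (c * τ) * (g τ - r t₀ / c) + Real.exp (c * τ) * g' τ
          ≤ c * Real.exp (c * τ) * (g τ - r t₀ / c) + Real.exp (c * τ) * (-c * g τ + r τ) := by
            exact add_le_add_right (mul_le_mul_of_nonneg_left h1 h3.le) _
        _ = Real.exp (c * τ) * (r τ - r t₀) := by
            rw [mul_sub, mul_sub]
            rw [show c * Real.exp (c*τ) * (r t₀/c) = Real.exp (c*τ) * (c * (r t₀/c)) by ring, h4]
            ring
        _ ≤ 0 := mul_nonpos_of_nonneg_of_nonpos h3.le (by linarith)
    have h5 := anti_on_Icc hφd hφ0 t₀ ⟨le_refl _, htt⟩ t ⟨htt, le_refl _⟩ htt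
    have h6 : Real.exp (c * t₀) * (g t₀ - r t₀ / c) ≤ Real.exp (c * t₀) * g t₀ := by
      have : 0 ≤ r t₀ / c := div_nonneg (hrnn t₀ ht₀) hc.le
      nlinarith [Real.exp_pos (c * t₀)]
    have h7 : Real.exp (c * t) * (g t - r t₀ / c) ≤ Real.exp (c * t₀) * g t₀ := le_trans h5 h6
    have h8 := mul_le_mul_of_nonneg_left h7 (Real.exp_pos (-(c * t))).le
    rw [show Real.exp (-(c*t)) * (Real.exp (c*t) * (g t - r t₀/c))
        = (Real.exp (-(c*t) + c*t)) * (g t - r t₀/c) by rw [Real.exp_add]; ring] at h8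
    rw [show Real.exp (-(c*t)) * (Real.exp (c*t₀) * g t₀)
        = (Real.exp (c*t₀ - c*t)) * g t₀ by rw [sub_eq_add_neg, add_comm, Real.exp_add]; ring] at h8
    simp only [neg_add_cancel, Real.exp_zero, one_mul] at h8
    linarith
  have hlin : Tendsto (fun t : ℝ => c * t₀ - c * t) atTop atBot := by
    have h1 : Tendsto (fun t : ℝ => c * t) atTop atTop :=
      Tendsto.const_mul_atTop hc tendsto_id
    have h2 : Tendsto (fun t : ℝ => -(c * t)) atTop atBot := tendsto_neg_atBot_iff.2 h1
    have h3 := tendsto_atBot_add_const_left atTop (c * t₀) h2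
    have h4 : (fun t : ℝ => c * t₀ - c * t) = fun t => c * t₀ + -(c * t) := by
      funext t; ring
    rw [h4]; exact h3
  have hexp0 : Tendsto (fun t => Real.exp (c * t₀ - c * t) * g t₀) atTop (𝓝 0) := by
    have := (Real.tendsto_exp_atBot.comp hlin).mul_const (g t₀)
    simpa using this
  have hev2 : ∀ᶠ t in atTop, Real.exp (c * t₀ - c * t) * g t₀ < δ / 2 :=
    hexp0.eventually (gt_mem_nhds (by positivity))
  rw [eventually_atTop] at hev2
  obtain ⟨t₁, ht₁⟩ := hev2
  refine ⟨max t₀ t₁, fun t ht => ?_⟩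
  have htt₀ : t₀ ≤ t := le_trans (le_max_left _ _) ht
  have htt₁ : t₁ ≤ t := le_trans (le_max_right _ _) ht
  have h9 := key t htt₀
  have h10 := ht₁ t htt₁
  have h11 : r t₀ / c < δ / 2 := by
    rw [div_lt_iff₀ hc]
    calc r t₀ < c * δ / 2 := hrt₀
      _ = δ / 2 * c := by ring
  have h12 : 0 ≤ g t := hgnn t (le_trans ht₀ htt₀)
  rw [Real.dist_eq, sub_zero, abs_of_nonneg h12]
  linarith

/-- batch mode (`u = 0`): every solution starting in `D` converges to
`((b(0)/n)·(1,…,1), 0)` where `b(0) = s(0) + Σⱼ xⱼ(0)`. -/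
theorem stmt_17 (n : ℕ) (hn : 1 ≤ n) (m a : Fin n → ℝ)
    (hm : ∀ i, 0 < m i) (ha : ∀ i, 0 < a i)
    (ε : ℝ) (hε : 0 < ε)
    (x : ℝ → Fin n → ℝ) (s : ℝ → ℝ) (hsol : IsSol n m a ε 0 x s)
    (hinit : InD n (x 0) (s 0)) :
    Tendsto (fun t => (x t, s t)) atTop
      (𝓝 ((fun _ => (s 0 + ∑ j, x 0 j) / (n : ℝ)), (0 : ℝ))) := by
  classical
  obtain ⟨hx0, hx0ne, hs0mem⟩ := hinit
  have hs0 : 0 ≤ s 0 := hs0mem.1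
  have hn0 : 0 < n := hn
  have hnR : (0:ℝ) < (n:ℝ) := by exact_mod_cast hn0
  have hpos := invariance n hn m a hm ha ε hε x s hsol hx0 hs0
  have hcons := conservation hsol
  have hanti := s_antitone hm ha hsol hpos
  have hs0lim := s_tendsto_zero hn hm ha hε hsol hpos hx0 hx0ne
  set b : ℝ := s 0 + ∑ j, x 0 j with hbdef
  have hsig0 : 0 < ∑ j, x 0 j := sum_x0_pos hx0 hx0ne
  have hbpos : 0 < b := by rw [hbdef]; linarith
  set A : ℝ → ℝ := fun t => (∑ i, x t i) / (n:ℝ) with hAdef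
  set w : ℝ → Fin n → ℝ := fun t i => x t i - A t with hwdef
  set g : ℝ → ℝ := fun t => ∑ i, (w t i)^2 with hgdef
  set Dx : Fin n → ℝ → ℝ := fun i t =>
    (monod (m i) (a i) (s t) - 0) * x t i + ε * (mutT n).mulVec (x t) i with hDxdef
  set DA : ℝ → ℝ := fun t => (∑ j, Dx j t) / (n:ℝ) with hDAdef
  have hAd : ∀ t, 0 ≤ t → HasDerivAt A (DA t) t := by
    intro t ht
    exact (HasDerivAt.fun_sum (fun i _ => (hsol t ht).1 i)).div_const _
  have hwd : ∀ t, 0 ≤ t → ∀ i, HasDerivAt (fun τ => w τ i) (Dx i t - DA t) t := by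
    intro t ht i
    exact ((hsol t ht).1 i).sub (hAd t ht)
  have hgd : ∀ t, 0 ≤ t → HasDerivAt g (∑ i, 2 * w t i ^ 1 * (Dx i t - DA t)) t := by
    intro t ht
    apply HasDerivAt.fun_sum
    intro i _
    have := (hwd t ht i).fun_pow 2
    simpa using this
  have hSw : ∀ t, ∑ i, w t i = 0 := by
    intro t
    rw [hwdef]
    simp only
    rw [Finset.sum_sub_distrib, Finset.sum_const, Finset.card_univ, Fintype.card_fin,
      nsmul_eq_mul, hAdef]
    field_simp
    ring
  have hgnn : ∀ t, 0 ≤ g t := fun t => Finset.sum_nonneg (fun i _ => sq_nonneg _)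
  set c : ℝ := 2 * ε / (n:ℝ)^2 with hcdef
  have hcpos : 0 < c := by positivity
  set C : ℝ := 2 * b^2 * (∑ i, m i / a i) with hCdef
  have hCnn : 0 ≤ C := by
    rw [hCdef]
    apply mul_nonneg (by positivity)
    exact Finset.sum_nonneg (fun i _ => div_nonneg (hm i).le (ha i).le)
  -- the key differential inequality for g
  have hkey : ∀ t, 0 ≤ t → ∑ i, 2 * w t i ^ 1 * (Dx i t - DA t) ≤ -c * g t + C * s t := by
    intro t ht
    have hst : 0 ≤ s t := (hpos t ht).2
    have hxt : ∀ i, 0 ≤ x t i := (hpos t ht).1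
    have hsigb : ∑ i, x t i = b - s t := by have := hcons t ht; rw [hbdef]; linarith
    have hsts0 : s t ≤ s 0 := hanti 0 t le_rfl ht
    have hxib : ∀ i, x t i ≤ b := by
      intro i
      calc x t i ≤ ∑ j, x t j := Finset.single_le_sum (fun j _ => hxt j) (Finset.mem_univ i)
        _ = b - s t := hsigb
        _ ≤ b := by linarith
    have hAb : 0 ≤ A t ∧ A t ≤ b := by
      constructor
      · rw [hAdef]; apply div_nonneg _ hnR.le; exact Finset.sum_nonneg (fun i _ => hxt i)
      · rw [hAdef]
        have h1 : ∑ i, x t i ≤ b := by rw [hsigb]; linarith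
        have h2 : (∑ i, x t i) / (n:ℝ) ≤ ∑ i, x t i := by
          apply div_le_self (Finset.sum_nonneg (fun i _ => hxt i))
          exact_mod_cast hn
        linarith
    have hwb : ∀ i, |w t i| ≤ b := by
      intro i
      rw [hwdef]
      simp only
      rw [abs_le]
      constructor
      · have := hxt i; linarith [hAb.2]
      · have := hxib i; linarith [hAb.1]
    -- rewrite the derivative
    have e0 : ∑ i, 2 * w t i ^ 1 * (Dx i t - DA t)
        = 2 * (∑ i, w t i * Dx i t) - 2 * DA t * (∑ i, w t i) := by
      rw [Finset.mul_sum, Finset.mul_sum, ← Finset.sum_sub_distrib]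
      apply Finset.sum_congr rfl
      intro i _
      ring
    rw [e0, hSw t]
    simp only [mul_zero, sub_zero]
    -- split the sum
    have e1 : ∑ i, w t i * Dx i t
        = (∑ i, w t i * (monod (m i) (a i) (s t) * x t i))
          + ε * ∑ i, w t i * (mutT n).mulVec (w t) i := by
      have hxw : x t = (fun i => w t i) + (fun _ => A t) := by
        funext i
        simp [hwdef]
      rw [hDxdef]
      simp only [sub_zero]
      have e2 : ∀ i, (mutT n).mulVec (x t) i = (mutT n).mulVec (w t) i := by
        intro i
        rw [hxw, Matrix.mulVec_add]
        simp only [Pi.add_apply]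
        rw [show ((fun _ : Fin n => A t) : Fin n → ℝ) = (fun _ => A t) from rfl,
          mulVec_mutT_const (A t) i]
        ring
      rw [Finset.mul_sum, ← Finset.sum_add_distrib]
      apply Finset.sum_congr rfl
      intro i _
      rw [e2 i]
      ring
    rw [e1]
    -- bound the two pieces
    have hquad : ∑ i, w t i * (mutT n).mulVec (w t) i ≤ -(g t / (n:ℝ)^2) := by
      rw [quad_mutT]
      have hp : g t ≤ (n:ℝ)^2 * edgeE (w t) := poincare hn (w t) (hSw t)
      have h2 : g t / (n:ℝ)^2 ≤ edgeE (w t) := by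
        rw [div_le_iff₀ (by positivity)]
        linarith
      linarith
    have hlin : ∑ i, w t i * (monod (m i) (a i) (s t) * x t i)
        ≤ b^2 * (∑ i, m i / a i) * s t := by
      have hbd : ∀ i, w t i * (monod (m i) (a i) (s t) * x t i)
          ≤ b * ((m i / a i) * s t * b) := by
        intro i
        have hμnn : 0 ≤ monod (m i) (a i) (s t) := monod_nonneg (hm i) (ha i) hst
        have h1 : w t i * (monod (m i) (a i) (s t) * x t i)
            ≤ |w t i| * (monod (m i) (a i) (s t) * x t i) := by
          apply mul_le_mul_of_nonneg_right (le_abs_self _) (mul_nonneg hμnn (hxt i))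
        have h2 : |w t i| * (monod (m i) (a i) (s t) * x t i)
            ≤ b * (monod (m i) (a i) (s t) * x t i) :=
          mul_le_mul_of_nonneg_right (hwb i) (mul_nonneg hμnn (hxt i))
        have h3 : monod (m i) (a i) (s t) * x t i ≤ ((m i / a i) * s t) * b := by
          apply mul_le_mul (monod_le_slope (hm i) (ha i) hst) (hxib i) (hxt i)
          exact mul_nonneg (div_nonneg (hm i).le (ha i).le) hst
        calc w t i * (monod (m i) (a i) (s t) * x t i)
            ≤ b * (monod (m i) (a i) (s t) * x t i) := le_trans h1 h2
          _ ≤ b * ((m i / a i) * s t * b) := mul_le_mul_of_nonneg_left h3 hbpos.le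
      calc ∑ i, w t i * (monod (m i) (a i) (s t) * x t i)
          ≤ ∑ i, b * ((m i / a i) * s t * b) := Finset.sum_le_sum (fun i _ => hbd i)
        _ = ∑ i, (b^2 * (m i / a i)) * s t := by
            apply Finset.sum_congr rfl
            intro i _
            ring
        _ = b^2 * (∑ i, m i / a i) * s t := by
            rw [← Finset.sum_mul, ← Finset.mul_sum]
    calc 2 * ((∑ i, w t i * (monod (m i) (a i) (s t) * x t i))
            + ε * ∑ i, w t i * (mutT n).mulVec (w t) i)
        ≤ 2 * (b^2 * (∑ i, m i / a i) * s t + ε * (-(g t / (n:ℝ)^2))) := by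
          have := mul_le_mul_of_nonneg_left hquad hε.le
          nlinarith [hlin]
      _ = -c * g t + C * s t := by
          rw [hcdef, hCdef]
          field_simp
          ring
  -- conclude g → 0
  have hg0 : Tendsto g atTop (𝓝 0) := by
    apply decay_to_zero hcpos hgd (fun t _ => hgnn t) hkey
    · intro t ht
      exact mul_nonneg hCnn (hpos t ht).2
    · intro t₁ t₂ h1 h2
      exact mul_le_mul_of_nonneg_left (hanti t₁ t₂ h1 h2) hCnn
    · have := hs0lim.const_mul C
      simpa using this
  -- w → 0 componentwise
  have hsqrt : Tendsto (fun t => Real.sqrt (g t)) atTop (𝓝 0) := by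
    have := (Real.continuous_sqrt.tendsto 0).comp hg0
    simpa [Function.comp_def] using this
  have hwlim : ∀ i, Tendsto (fun t => w t i) atTop (𝓝 0) := by
    intro i
    have hub : ∀ t, w t i ≤ Real.sqrt (g t) := by
      intro t
      have h1 : (w t i)^2 ≤ g t :=
        Finset.single_le_sum (fun j _ => sq_nonneg (w t j)) (Finset.mem_univ i)
      calc w t i ≤ |w t i| := le_abs_self _
        _ = Real.sqrt ((w t i)^2) := (Real.sqrt_sq_eq_abs _).symm
        _ ≤ Real.sqrt (g t) := Real.sqrt_le_sqrt h1
    have hlb : ∀ t, -Real.sqrt (g t) ≤ w t i := by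
      intro t
      have h1 : (w t i)^2 ≤ g t :=
        Finset.single_le_sum (fun j _ => sq_nonneg (w t j)) (Finset.mem_univ i)
      have h2 : |w t i| ≤ Real.sqrt (g t) := by
        rw [← Real.sqrt_sq_eq_abs]
        exact Real.sqrt_le_sqrt h1
      have := neg_abs_le (w t i)
      linarith
    have hneg : Tendsto (fun t => -Real.sqrt (g t)) atTop (𝓝 0) := by
      have := hsqrt.neg
      simpa using this
    exact tendsto_of_tendsto_of_tendsto_of_le_of_le hneg hsqrt hlb hub
  -- A → b / n
  have hAlim : Tendsto A atTop (𝓝 (b / (n:ℝ))) := by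
    have h1 : Tendsto (fun t => (b - s t) / (n:ℝ)) atTop (𝓝 (b / (n:ℝ))) := by
      have h0 : Tendsto (fun t => b - s t) atTop (𝓝 (b - 0)) :=
        tendsto_const_nhds.sub hs0lim
      have := h0.div_const (n:ℝ)
      simpa using this
    apply h1.congr'
    filter_upwards [eventually_ge_atTop (0:ℝ)] with t ht
    have hsigb : ∑ i, x t i = b - s t := by have := hcons t ht; rw [hbdef]; linarith
    rw [hAdef]
    simp only
    rw [hsigb]
  -- assemble
  have hxlim : Tendsto (fun t => x t) atTop (𝓝 (fun _ => (s 0 + ∑ j, x 0 j) / (n:ℝ))) := by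
    rw [tendsto_pi_nhds]
    intro i
    have h1 : Tendsto (fun t => w t i + A t) atTop (𝓝 (0 + b / (n:ℝ))) :=
      (hwlim i).add hAlim
    have h2 : (fun t => w t i + A t) = fun t => x t i := by
      funext t
      simp [hwdef]
    rw [h2] at h1
    simpa [hbdef] using h1
  exact hxlim.prodMk_nhds hs0lim
end
end
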